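/- arXiv:1808.04410 — 4 statements merged into one kernel-verified Lean document; each statement's English description precedes it below -/
import Mathlib

section
/- Let H be a Hilbert space, let B ⊆ B(H) be a C*-subalgebra, and let {p_i}_{i∈I} be a complete orthogonal family of rank-one projections on H with C*({p_i : i∈I}) ⊆ B ⊆ W*({p_i : i∈I}), where W*({p_i}) is the von Neumann algebra generated by the p_i. If either (i) B is closed in the strong operator topology, or (ii) B is abstractly *-isomorphic to ℓ∞(X) for some set X, then B = W*({p_i : i∈I}). -/
/- Common definitions for formalising "Cartan subalgebras of uniform Roe algebras"
   (White–Willett).  We model C*-subalgebras of B(H) as norm-closed sets of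
   continuous linear operators underlying non-unital star subalgebras. -/

open scoped InnerProductSpace ENNReal
open Filter

noncomputable section

universe u v

namespace RoeCartan

variable {H : Type u} [NormedAddCommGroup H] [InnerProductSpace ℂ H] [CompleteSpace H]

/-- A (possibly non-unital) C*-subalgebra of `B(H)`, viewed as a set of operators:
a norm-closed set which underlies a non-unital star subalgebra. -/
def IsCstarSubalgebra (A : Set (H →L[ℂ] H)) : Prop :=
  IsClosed A ∧ ∃ S : NonUnitalStarSubalgebra ℂ (H →L[ℂ] H), (S : Set (H →L[ℂ] H)) = A

/-- An orthogonal projection on `H`. -/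
def IsProj (p : H →L[ℂ] H) : Prop := p * p = p ∧ IsSelfAdjoint p

/-- A rank-one operator on `H`. -/
def IsRankOne (p : H →L[ℂ] H) : Prop := Module.finrank ℂ (LinearMap.range (p : H →ₗ[ℂ] H)) = 1

/-- `B` is a maximal abelian (self-adjoint) subalgebra of `A`: it is commutative, and any
element of `A` commuting with all of `B` lies in `B`. -/
def IsMasaIn (B A : Set (H →L[ℂ] H)) : Prop :=
  B ⊆ A ∧ (∀ b₁ ∈ B, ∀ b₂ ∈ B, b₁ * b₂ = b₂ * b₁) ∧
    ∀ a ∈ A, (∀ b ∈ B, a * b = b * a) → a ∈ B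

/-- A minimal projection of `B`: a nonzero projection in `B` whose only subprojections in `B`
are `0` and itself. -/
def IsMinimalProjIn (B : Set (H →L[ℂ] H)) (p : H →L[ℂ] H) : Prop :=
  p ∈ B ∧ IsProj p ∧ p ≠ 0 ∧
    ∀ q ∈ B, IsProj q → q * p = q → q = 0 ∨ q = p

/-- A conditional expectation from `A` onto `B`: a positive linear contraction restricting to
the identity on `B` and satisfying the `B`-bimodule property. -/
def IsCondExp (A B : Set (H →L[ℂ] H)) (E : (H →L[ℂ] H) → H →L[ℂ] H) : Prop :=
  (∀ a ∈ A, E a ∈ B) ∧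
  (∀ a ∈ A, ∀ b ∈ A, E (a + b) = E a + E b) ∧
  (∀ (c : ℂ), ∀ a ∈ A, E (c • a) = c • E a) ∧
  (∀ a ∈ A, ‖E a‖ ≤ ‖a‖) ∧
  (∀ a ∈ A, a.IsPositive → (E a).IsPositive) ∧
  (∀ b ∈ B, E b = b) ∧
  (∀ b₁ ∈ B, ∀ b₂ ∈ B, ∀ a ∈ A, E (b₁ * a * b₂) = b₁ * E a * b₂)

/-- A faithful conditional expectation. -/
def IsFaithfulCondExp (A B : Set (H →L[ℂ] H)) (E : (H →L[ℂ] H) → H →L[ℂ] H) : Prop :=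
  IsCondExp A B E ∧ ∀ a ∈ A, E (star a * a) = 0 → a = 0

/-- The normaliser of `B` in `A`. -/
def NormalizerIn (A B : Set (H →L[ℂ] H)) : Set (H →L[ℂ] H) :=
  {a ∈ A | ∀ b ∈ B, a * b * star a ∈ B ∧ star a * b * a ∈ B}

/-- `B` contains an approximate unit for `A`: there is a net in `B` which converges in norm to
the identity when multiplied against any element of `A`. -/
def HasApproxUnitIn (B A : Set (H →L[ℂ] H)) : Prop :=
  ∃ (ι : Type) (l : Filter ι) (e : ι → H →L[ℂ] H), l.NeBot ∧ (∀ i, e i ∈ B) ∧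
    ∀ a ∈ A, Tendsto (fun i => e i * a) l (nhds a) ∧ Tendsto (fun i => a * e i) l (nhds a)

/-- The C*-algebra generated by a set `S` of operators: the norm closure of the star
subalgebra generated by `S`. -/
def CstarGen (S : Set (H →L[ℂ] H)) : Set (H →L[ℂ] H) :=
  closure ((NonUnitalStarAlgebra.adjoin ℂ S :
    NonUnitalStarSubalgebra ℂ (H →L[ℂ] H)) : Set (H →L[ℂ] H))

/-- The von Neumann algebra generated by a (self-adjoint) set: its double commutant. -/
def WStar (S : Set (H →L[ℂ] H)) : Set (H →L[ℂ] H) := Set.centralizer (Set.centralizer S)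

/-- `B` is a Cartan subalgebra of `A` (Renault): a MASA containing an approximate unit for `A`,
whose normaliser generates `A` as a C*-algebra, and which is the image of a faithful
conditional expectation. -/
def IsCartanIn (B A : Set (H →L[ℂ] H)) : Prop :=
  IsCstarSubalgebra A ∧ IsCstarSubalgebra B ∧
  IsMasaIn B A ∧ HasApproxUnitIn B A ∧
  CstarGen (NormalizerIn A B) = A ∧
  ∃ E, IsFaithfulCondExp A B E

/-- `B ⊆ A` is co-separable: `A` is generated as a C*-algebra by `B` together with countably
many elements of `A`. -/
def CoSeparableIn (B A : Set (H →L[ℂ] H)) : Prop :=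
  ∃ S : Set (H →L[ℂ] H), S.Countable ∧ S ⊆ A ∧ CstarGen (S ∪ B) = A

/-- A complete orthogonal family of rank-one projections: mutually orthogonal rank-one
projections whose ranges span a dense subspace of `H`. -/
def IsCompleteRankOneFamily {I : Type v} (p : I → H →L[ℂ] H) : Prop :=
  (∀ i, IsProj (p i) ∧ IsRankOne (p i)) ∧
  (∀ i j, i ≠ j → p i * p j = 0) ∧
  Dense ((⨆ i, LinearMap.range (p i : H →ₗ[ℂ] H) : Submodule ℂ H) : Set H)

/-- A complete orthogonal family of projections: mutually orthogonal projections summing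
strongly to the identity. -/
def IsCompleteProjFamily {I : Type v} (q : I → H →L[ℂ] H) : Prop :=
  (∀ i, IsProj (q i)) ∧ (∀ i j, i ≠ j → q i * q j = 0) ∧
  ∀ v : H, HasSum (fun i => q i v) v

/-- `B` is abstractly *-isomorphic to `ℓ∞(I)`. -/
def AbstractlyLinf (B : Set (H →L[ℂ] H)) (I : Type v) : Prop :=
  ∃ SB : NonUnitalStarSubalgebra ℂ (H →L[ℂ] H), (SB : Set (H →L[ℂ] H)) = B ∧
    Nonempty (SB ≃⋆ₐ[ℂ] lp (fun _ : I => ℂ) ∞)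

/-- A *-automorphism of the set `A` of operators. -/
def IsStarAutoOn (A : Set (H →L[ℂ] H)) (α : (H →L[ℂ] H) → H →L[ℂ] H) : Prop :=
  Set.BijOn α A A ∧
  (∀ a ∈ A, ∀ b ∈ A, α (a + b) = α a + α b) ∧
  (∀ a ∈ A, ∀ b ∈ A, α (a * b) = α a * α b) ∧
  (∀ (c : ℂ), ∀ a ∈ A, α (c • a) = c • α a) ∧
  ∀ a ∈ A, α (star a) = star (α a)

/-! ### `ℓ²(X)` and uniform Roe algebras -/

/-- `ℓ²(X)` with complex coefficients. -/
abbrev ell2 (X : Type v) : Type v := lp (fun _ : X => ℂ) 2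

/-- The canonical basis vector `δ_x` of `ℓ²(X)`. -/
def delta {X : Type v} (x : X) : ell2 X :=
  letI := Classical.decEq X
  lp.single 2 x 1

/-- The `(x,y)` matrix entry `⟨δ_x, a δ_y⟩` of an operator `a` on `ℓ²(X)`. -/
def matEntry {X : Type v} (a : ell2 X →L[ℂ] ell2 X) (x y : X) : ℂ := a (delta y) x

/-- The support of an operator on `ℓ²(X)`. -/
def opSupport {X : Type v} (a : ell2 X →L[ℂ] ell2 X) : Set (X × X) :=
  {q | matEntry a q.1 q.2 ≠ 0}

/-- `a` is a multiplication operator by a (necessarily bounded) function `X → ℂ`. -/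
def IsDiagonalOp {X : Type v} (a : ell2 X →L[ℂ] ell2 X) : Prop :=
  ∃ f : X → ℂ, ∀ (ξ : ell2 X) (x : X), a ξ x = f x * ξ x

/-- The copy of `ℓ∞(X)` inside `B(ℓ²(X))`, i.e. the multiplication operators. -/
def LinfOps (X : Type v) : Set (ell2 X →L[ℂ] ell2 X) := {a | IsDiagonalOp a}

/-- Finite propagation with respect to a metric. -/
def HasFinitePropagation {X : Type v} [MetricSpace X] (a : ell2 X →L[ℂ] ell2 X) : Prop :=
  ∃ r : ℝ, ∀ x y : X, matEntry a x y ≠ 0 → dist x y ≤ r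

/-- The uniform Roe algebra of a metric space: the norm closure of the finite propagation
operators on `ℓ²(X)`. -/
def RoeAlgebra (X : Type v) [MetricSpace X] : Set (ell2 X →L[ℂ] ell2 X) :=
  closure {a : ell2 X →L[ℂ] ell2 X | HasFinitePropagation a}

/-- A metric space has bounded geometry if balls of any fixed radius have uniformly
bounded (finite) cardinality. -/
def BoundedGeometry (X : Type v) [MetricSpace X] : Prop :=
  ∀ r : ℝ, ∃ N : ℕ, ∀ x : X,
    (Metric.closedBall x r).Finite ∧ (Metric.closedBall x r).ncard ≤ N

/-! ### Coarse structures -/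

/-- A coarse structure on a set `X` (Roe). -/
structure CoarseStructure (X : Type v) where
  sets : Set (Set (X × X))
  diag_mem : {q : X × X | q.1 = q.2} ∈ sets
  union_mem : ∀ ⦃E F⦄, E ∈ sets → F ∈ sets → E ∪ F ∈ sets
  comp_mem : ∀ ⦃E F⦄, E ∈ sets → F ∈ sets →
    {q : X × X | ∃ y, (q.1, y) ∈ E ∧ (y, q.2) ∈ F} ∈ sets
  inv_mem : ∀ ⦃E⦄, E ∈ sets → {q : X × X | (q.2, q.1) ∈ E} ∈ sets
  subset_mem : ∀ ⦃E F⦄, E ∈ sets → F ⊆ E → F ∈ sets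

/-- Bounded geometry: slices of every entourage have uniformly bounded cardinality. -/
def CoarseStructure.BoundedGeometry {X : Type v} (𝓔 : CoarseStructure X) : Prop :=
  ∀ E ∈ 𝓔.sets, ∃ k : ℕ, ∀ x : X,
    ({y | (x, y) ∈ E}.Finite ∧ {y | (x, y) ∈ E}.ncard ≤ k) ∧
    ({y | (y, x) ∈ E}.Finite ∧ {y | (y, x) ∈ E}.ncard ≤ k)

/-- Connectedness of a coarse structure. -/
def CoarseStructure.Connected {X : Type v} (𝓔 : CoarseStructure X) : Prop :=
  ∀ x y : X, ({(x, y)} : Set (X × X)) ∈ 𝓔.sets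

/-- `𝓔` is the coarse structure generated by the family `S`. -/
def CoarseStructure.IsGeneratedBy {X : Type v} (𝓔 : CoarseStructure X)
    (S : Set (Set (X × X))) : Prop :=
  S ⊆ 𝓔.sets ∧ ∀ 𝓓 : CoarseStructure X, S ⊆ 𝓓.sets → 𝓔.sets ⊆ 𝓓.sets

/-- The uniform Roe algebra of a coarse space. -/
def CoarseRoeAlgebra (X : Type v) (𝓔 : CoarseStructure X) :
    Set (ell2 X →L[ℂ] ell2 X) :=
  closure {a : ell2 X →L[ℂ] ell2 X | opSupport a ∈ 𝓔.sets}

/-! ### The coarse structure attached to a Cartan pair -/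

/-- The set of minimal projections of `B`, as a type. -/
abbrev MinProj (B : Set (H →L[ℂ] H)) : Type u := {p : H →L[ℂ] H // IsMinimalProjIn B p}

/-- The generating entourages `E_{a,ε}` of the coarse structure of a Cartan pair. -/
def cartanEntourages (A B : Set (H →L[ℂ] H)) : Set (Set (MinProj B × MinProj B)) :=
  {E | ∃ a ∈ NormalizerIn A B, ∃ ε : ℝ, 0 < ε ∧
    E = {q : MinProj B × MinProj B |
          ε ≤ ‖(q.1 : H →L[ℂ] H) * a * (q.2 : H →L[ℂ] H)‖}}

/-- Conjugation of an operator on `H` to an operator on `ℓ²(X)` by a unitary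
`u : ℓ²(X) → H`, i.e. `a ↦ u* a u`. -/
def conjDown {X : Type v} (u : ell2 X ≃ₗᵢ[ℂ] H) (a : H →L[ℂ] H) :
    ell2 X →L[ℂ] ell2 X :=
  ((u.symm.toContinuousLinearEquiv : H →L[ℂ] ell2 X).comp a).comp
    (u.toContinuousLinearEquiv : ell2 X →L[ℂ] H)

/-- Conjugation of an operator on `ℓ²(X)` to an operator on `H` by a unitary
`u : ℓ²(X) → H`, i.e. `a ↦ u a u*`. -/
def conjUp {X : Type v} (u : ell2 X ≃ₗᵢ[ℂ] H) (a : ell2 X →L[ℂ] ell2 X) :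
    H →L[ℂ] H :=
  ((u.toContinuousLinearEquiv : ell2 X →L[ℂ] H).comp a).comp
    (u.symm.toContinuousLinearEquiv : H →L[ℂ] ell2 X)

/-! ### Coarse maps -/

/-- A uniformly expansive map between metric spaces. -/
def UniformlyExpansive {X : Type u} {Y : Type v} [MetricSpace X] [MetricSpace Y]
    (f : X → Y) : Prop :=
  ∀ r : ℝ, ∃ s : ℝ, ∀ x x' : X, dist x x' ≤ r → dist (f x) (f x') ≤ s

/-- Two maps into a metric space are close. -/
def Close {X : Type u} {Y : Type v} [MetricSpace Y] (f g : X → Y) : Prop :=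
  ∃ C : ℝ, ∀ x : X, dist (f x) (g x) ≤ C

/-- A coarse equivalence between metric spaces. -/
def IsCoarseEquivalence {X : Type u} {Y : Type v} [MetricSpace X] [MetricSpace Y]
    (f : X → Y) : Prop :=
  UniformlyExpansive f ∧ ∃ g : Y → X, UniformlyExpansive g ∧
    Close (fun x => g (f x)) (fun x => x) ∧ Close (fun y => f (g y)) (fun y => y)

/-- `X` and `Y` are coarsely equivalent. -/
def CoarselyEquivalent (X : Type u) (Y : Type v) [MetricSpace X] [MetricSpace Y] : Prop :=
  ∃ f : X → Y, IsCoarseEquivalence f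

/-- A coarse embedding between metric spaces. -/
def IsCoarseEmbedding {X : Type u} {Y : Type v} [MetricSpace X] [MetricSpace Y]
    (f : X → Y) : Prop :=
  ∃ ρminus ρplus : ℝ → ℝ, Monotone ρminus ∧ Monotone ρplus ∧
    Tendsto ρminus atTop atTop ∧
    ∀ x x' : X, ρminus (dist x x') ≤ dist (f x) (f x') ∧
      dist (f x) (f x') ≤ ρplus (dist x x')

/-- `X` coarsely embeds into a (real) Hilbert space. -/
def CoarselyEmbeddableIntoHilbert (X : Type v) [MetricSpace X] : Prop :=
  ∃ (E : Type) (iE : NormedAddCommGroup E)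
    (_ : @InnerProductSpace ℝ E _ iE.toSeminormedAddCommGroup)
    (_ : @CompleteSpace E iE.toMetricSpace.toPseudoMetricSpace.toUniformSpace)
    (f : X → E),
    @IsCoarseEmbedding X E _ iE.toMetricSpace f

/-- The `r`-boundary of a subset of a metric space (Block–Weinberger). -/
def rBoundary {X : Type v} [MetricSpace X] (r : ℝ) (S : Set X) : Set X :=
  {x : X | (∃ s ∈ S, dist x s ≤ r) ∧ ∃ t ∉ S, dist x t ≤ r}

/-- Amenability in the sense of Block and Weinberger. -/
def BWAmenable (X : Type v) [MetricSpace X] : Prop :=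
  ∀ r > (0 : ℝ), ∀ ε > (0 : ℝ), ∃ S : Set X, S.Finite ∧ S.Nonempty ∧
    ((rBoundary r S).ncard : ℝ) ≤ ε * S.ncard

/-- Yu's property A. -/
def PropertyA (X : Type v) [MetricSpace X] : Prop :=
  ∀ r > (0 : ℝ), ∀ ε > (0 : ℝ), ∃ S > (0 : ℝ), ∃ ξ : X → ell2 X,
    (∀ x : X, ‖ξ x‖ = 1) ∧
    (∀ x y : X, ξ x y ≠ 0 → dist x y ≤ S) ∧
    ∀ x y : X, dist x y ≤ r → ‖ξ x - ξ y‖ ≤ ε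

/-- A *-isomorphism between the uniform Roe algebras of `X` and `Y`. -/
def IsStarIsoBetween (X : Type u) (Y : Type v) [MetricSpace X] [MetricSpace Y]
    (φ : (ell2 X →L[ℂ] ell2 X) → ell2 Y →L[ℂ] ell2 Y) : Prop :=
  Set.BijOn φ (RoeAlgebra X) (RoeAlgebra Y) ∧
  (∀ a ∈ RoeAlgebra X, ∀ b ∈ RoeAlgebra X, φ (a + b) = φ a + φ b) ∧
  (∀ a ∈ RoeAlgebra X, ∀ b ∈ RoeAlgebra X, φ (a * b) = φ a * φ b) ∧
  (∀ (c : ℂ), ∀ a ∈ RoeAlgebra X, φ (c • a) = c • φ a) ∧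
  ∀ a ∈ RoeAlgebra X, φ (star a) = star (φ a)

end RoeCartan

namespace RoeCartan


/-- From a rank-one operator, a spanning nonzero vector of its range. -/
lemma exists_spanning_of_rankOne {H : Type u} [NormedAddCommGroup H]
    [InnerProductSpace ℂ H] {q : H →L[ℂ] H} (h : IsRankOne q) :
    ∃ w : H, w ∈ LinearMap.range (q : H →ₗ[ℂ] H) ∧ w ≠ 0 ∧
      ∀ u ∈ LinearMap.range (q : H →ₗ[ℂ] H), ∃ c : ℂ, u = c • w := by
  obtain ⟨v, hv0, hv⟩ := finrank_eq_one_iff'.mp h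
  refine ⟨(v : H), v.2, fun h0 => hv0 (Subtype.ext h0), ?_⟩
  intro u hu
  obtain ⟨c, hc⟩ := hv ⟨u, hu⟩
  exact ⟨c, by simpa [eq_comm] using congrArg Subtype.val hc⟩

/-- `map_smul` for star-algebra equivalences, stated by hand. -/
lemma starAlgEquiv_map_smul {A : Type*} {C : Type*} [Add A] [Mul A] [SMul ℂ A] [Star A]
    [Add C] [Mul C] [SMul ℂ C] [Star C] (φ : A ≃⋆ₐ[ℂ] C) (r : ℂ) (a : A) :
    φ (r • a) = r • φ a := φ.map_smul' r a

/-- `map_mul` for star-algebra equivalences, stated by hand. -/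
lemma starAlgEquiv_map_mul {A : Type*} {C : Type*} [Add A] [Mul A] [SMul ℂ A] [Star A]
    [Add C] [Mul C] [SMul ℂ C] [Star C] (φ : A ≃⋆ₐ[ℂ] C) (a b : A) :
    φ (a * b) = φ a * φ b := φ.map_mul' a b

set_option maxHeartbeats 1000000 in
set_option synthInstance.maxHeartbeats 400000 in
/-- If `C*({pᵢ}) ⊆ B ⊆ W*({pᵢ})` and `B` is either strongly closed or abstractly
*-isomorphic to some `ℓ∞(X)`, then `B = W*({pᵢ})`. -/
theorem stmt4 {H : Type u} [NormedAddCommGroup H] [InnerProductSpace ℂ H] [CompleteSpace H]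
    (B : Set (H →L[ℂ] H)) (hB : IsCstarSubalgebra B)
    {I : Type u} (p : I → H →L[ℂ] H) (hp : IsCompleteRankOneFamily p)
    (h1 : CstarGen (Set.range p) ⊆ B) (h2 : B ⊆ WStar (Set.range p))
    (hyp :
      (∀ a : H →L[ℂ] H,
        (⇑a : H → H) ∈ closure ((fun b : H →L[ℂ] H => (⇑b : H → H)) '' B) → a ∈ B) ∨
      ∃ X : Type u, AbstractlyLinf B X) :
    B = WStar (Set.range p) := by
  classical
  obtain ⟨hproj, horth, hdense⟩ := hp
  -- symmetry of the projections
  have hsym : ∀ i (x y : H), ⟪p i x, y⟫_ℂ = ⟪x, p i y⟫_ℂ := fun i x y =>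
    (ContinuousLinearMap.isSelfAdjoint_iff_isSymmetric.mp (hproj i).1.2) x y
  -- p i is the identity on its range
  have hid : ∀ i, ∀ u ∈ LinearMap.range (p i : H →ₗ[ℂ] H), p i u = u := by
    rintro i u ⟨t, rfl⟩
    have := congrArg (fun f : H →L[ℂ] H => f t) (hproj i).1.1
    simpa using this
  choose w hwmem hwne hwspan using fun i => exists_spanning_of_rankOne (hproj i).2
  have hwnorm : ∀ i, ((‖w i‖ : ℝ) : ℂ) ≠ 0 := fun i => by
    simpa using norm_ne_zero_iff.mpr (hwne i)
  set e : I → H := fun i => ((‖w i‖ : ℝ) : ℂ)⁻¹ • w i with he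
  have hemem : ∀ i, e i ∈ LinearMap.range (p i : H →ₗ[ℂ] H) := fun i =>
    Submodule.smul_mem _ _ (hwmem i)
  have henorm : ∀ i, ‖e i‖ = 1 := by
    intro i
    have hne : ‖w i‖ ≠ 0 := norm_ne_zero_iff.mpr (hwne i)
    simp [he, norm_smul, inv_mul_cancel₀ hne]
  have hworth : ∀ i j, i ≠ j → ⟪w i, w j⟫_ℂ = 0 := by
    intro i j hij
    have h0 : ⟪p i (w i), p j (w j)⟫_ℂ = 0 := by
      rw [hsym i]
      have hz : p i (p j (w j)) = 0 := by
        have := congrArg (fun f : H →L[ℂ] H => f (w j)) (horth i j hij)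
        simpa using this
      rw [hz, inner_zero_right]
    rwa [hid i _ (hwmem i), hid j _ (hwmem j)] at h0
  have honb : Orthonormal ℂ e := by
    rw [orthonormal_iff_ite]
    intro i j
    by_cases hij : i = j
    · subst hij
      simp [inner_self_eq_norm_sq_to_K, henorm i]
    · simp [he, inner_smul_left, inner_smul_right, hworth i j hij, hij]
  have hinner_self : ∀ i, ⟪e i, e i⟫_ℂ = 1 := by
    intro i
    simp [inner_self_eq_norm_sq_to_K, henorm i]
  -- w i as a multiple of e i
  have hwe : ∀ i, w i = ((‖w i‖ : ℝ) : ℂ) • e i := by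
    intro i
    rw [he]
    simp [smul_smul, mul_inv_cancel₀ (hwnorm i)]
  -- the projections act as rank-one projections onto e i
  have hp_eig : ∀ i (v : H), p i v = ⟪e i, v⟫_ℂ • e i := by
    intro i v
    obtain ⟨c, hc⟩ := hwspan i (p i v) ⟨v, rfl⟩
    have hcw : p i v = (c * (‖w i‖ : ℝ)) • e i := by
      rw [hc]
      conv_lhs => rw [hwe i]
      rw [smul_smul]
    have hkey : ⟪e i, p i v⟫_ℂ = c * (‖w i‖ : ℝ) := by
      rw [hcw, inner_smul_right, hinner_self i, mul_one]
    rw [hcw, ← hkey, ← hsym i, hid i _ (hemem i)]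
  -- dense span
  have hle : (⨆ i, LinearMap.range (p i : H →ₗ[ℂ] H) : Submodule ℂ H) ≤
      Submodule.span ℂ (Set.range e) := by
    refine iSup_le fun i => ?_
    intro u hu
    obtain ⟨c, rfl⟩ := hwspan i u hu
    rw [hwe i, smul_smul]
    exact Submodule.smul_mem _ _ (Submodule.subset_span ⟨i, rfl⟩)
  have hdense' : Dense ((Submodule.span ℂ (Set.range e) : Submodule ℂ H) : Set H) :=
    hdense.mono (SetLike.coe_subset_coe.mpr hle)
  have hsp : ⊤ ≤ (Submodule.span ℂ (Set.range e)).topologicalClosure :=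
    (Submodule.dense_iff_topologicalClosure_eq_top.mp hdense').ge
  let b : HilbertBasis I ℂ H := HilbertBasis.mk honb hsp
  have hsum : ∀ v : H, HasSum (fun i => p i v) v := by
    intro v
    have h0 := b.hasSum_repr v
    have hfun : (fun i => b.repr v i • b i) = fun i => p i v := by
      funext i
      rw [b.repr_apply_apply, HilbertBasis.coe_mk, hp_eig]
    rwa [hfun] at h0
  -- operators agreeing against every p i agree
  have hext : ∀ a c : H →L[ℂ] H, (∀ i, a * p i = c * p i) → a = c := by
    intro a c h
    ext v
    have ha : HasSum (fun i => a (p i v)) (a v) := a.hasSum (hsum v)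
    have hc : HasSum (fun i => c (p i v)) (c v) := c.hasSum (hsum v)
    have hfun : (fun i => a (p i v)) = fun i => c (p i v) := by
      funext i
      have := congrArg (fun f : H →L[ℂ] H => f v) (h i)
      simpa using this
    rw [hfun] at ha
    exact ha.unique hc
  -- each p i lies in the commutant of the family
  have hcent : ∀ i, p i ∈ Set.centralizer (Set.range p) := by
    intro i
    rintro _ ⟨j, rfl⟩
    by_cases hij : j = i
    · subst hij; rfl
    · rw [horth j i hij, horth i j (Ne.symm hij)]
  -- eigenvalues of elements of the von Neumann algebra
  have heig : ∀ d ∈ WStar (Set.range p), ∀ i, ∃ μ : ℂ,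
      (∀ v, d (p i v) = μ • p i v) ∧ ‖μ‖ ≤ ‖d‖ := by
    intro d hd i
    have hcomm : p i * d = d * p i := hd (p i) (hcent i)
    have hrangeinv : d (w i) ∈ LinearMap.range (p i : H →ₗ[ℂ] H) := by
      obtain ⟨t, ht⟩ := hwmem i
      refine ⟨d t, ?_⟩
      have := congrArg (fun f : H →L[ℂ] H => f t) hcomm
      simp only [ContinuousLinearMap.mul_apply] at this
      rw [← ht]
      exact this
    obtain ⟨μ, hμ⟩ := hwspan i (d (w i)) hrangeinv
    refine ⟨μ, ?_, ?_⟩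
    · intro v
      obtain ⟨c, hc⟩ := hwspan i (p i v) ⟨v, rfl⟩
      calc d (p i v) = c • d (w i) := by rw [hc, map_smul]
        _ = (c * μ) • w i := by rw [hμ, smul_smul]
        _ = μ • p i v := by rw [hc, smul_smul, mul_comm]
    · have hle1 : ‖d (w i)‖ ≤ ‖d‖ * ‖w i‖ := d.le_opNorm _
      rw [hμ, norm_smul] at hle1
      have hw : 0 < ‖w i‖ := norm_pos_iff.mpr (hwne i)
      exact le_of_mul_le_mul_right hle1 hw
  have hpB : ∀ i, p i ∈ B := fun i =>
    h1 (subset_closure (NonUnitalStarAlgebra.subset_adjoin ℂ _ ⟨i, rfl⟩))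
  refine Set.Subset.antisymm h2 ?_
  intro d hd
  choose μ hμ hμbd using heig d hd
  have hdpi : ∀ i, d * p i = μ i • p i := by
    intro i
    ext v
    simpa using hμ i v
  rcases hyp with hstrong | ⟨X, SB, hSB, ⟨φ⟩⟩
  · -- strongly closed case
    apply hstrong
    have hmemF : ∀ F : Finset I, (∑ i ∈ F, μ i • p i) ∈ B := by
      intro F
      refine h1 (subset_closure ?_)
      show (∑ i ∈ F, μ i • p i) ∈ NonUnitalStarAlgebra.adjoin ℂ (Set.range p)
      exact sum_mem fun i _ =>
        SMulMemClass.smul_mem _ (NonUnitalStarAlgebra.subset_adjoin ℂ _ ⟨i, rfl⟩)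
    have htend : Tendsto (fun F : Finset I => (⇑(∑ i ∈ F, μ i • p i) : H → H))
        atTop (nhds (⇑d : H → H)) := by
      rw [tendsto_pi_nhds]
      intro v
      have hv : HasSum (fun i => μ i • p i v) (d v) := by
        have h0 : HasSum (fun i => d (p i v)) (d v) := d.hasSum (hsum v)
        simpa only [hμ] using h0
      have hv' : Tendsto (fun F : Finset I => ∑ i ∈ F, μ i • p i v)
          atTop (nhds (d v)) := hv
      refine hv'.congr fun F => ?_
      simp
    exact mem_closure_of_tendsto htend
      (Filter.Eventually.of_forall fun F => Set.mem_image_of_mem _ (hmemF F))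
  · -- ℓ∞ case
    have hpSB : ∀ i, p i ∈ SB := fun i => by
      rw [← SetLike.mem_coe, hSB]; exact hpB i
    set P : I → SB := fun i => (⟨p i, hpSB i⟩ : SB) with hP
    set χ : I → lp (fun _ : X => ℂ) ∞ := fun i => φ (P i) with hχ
    have horthχ : ∀ i j, i ≠ j → ∀ x, χ i x * χ j x = 0 := by
      intro i j hij x
      have h0 : P i * P j = 0 := Subtype.ext (by
        show p i * p j = 0
        exact horth i j hij)
      have hmul : χ i * χ j = 0 := by
        rw [hχ]
        simp only
        rw [← map_mul, h0, map_zero]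
      calc χ i x * χ j x = (χ i * χ j) x := by rw [lp.infty_coeFn_mul]; rfl
        _ = 0 := by rw [hmul]; exact rfl
    set g : X → ℂ := fun x => if h : ∃ i, χ i x ≠ 0 then μ h.choose else 0 with hg
    have hg_eq : ∀ i x, χ i x ≠ 0 → g x = μ i := by
      intro i x hx
      have hex : ∃ j, χ j x ≠ 0 := ⟨i, hx⟩
      have hj := hex.choose_spec
      have hji : hex.choose = i := by
        by_contra hne
        exact hj (by
          have := horthχ hex.choose i hne x
          exact (mul_eq_zero.mp this).resolve_right hx)
      rw [hg]
      simp only [dif_pos hex, hji]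
    have hgbd : ∀ x, ‖g x‖ ≤ ‖d‖ := by
      intro x
      by_cases hx : ∃ i, χ i x ≠ 0
      · rw [hg]; simp only [dif_pos hx]; exact hμbd _
      · rw [hg]; simp only [dif_neg hx, norm_zero]; exact norm_nonneg d
    have hgmem : Memℓp g ∞ := memℓp_infty ⟨‖d‖, by rintro - ⟨x, rfl⟩; exact hgbd x⟩
    set G : lp (fun _ : X => ℂ) ∞ := ⟨g, hgmem⟩ with hG
    have hGχ : ∀ i, G * χ i = μ i • χ i := by
      intro i
      apply lp.ext
      funext x
      rw [lp.infty_coeFn_mul, lp.coeFn_smul]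
      show G x * χ i x = (μ i • (⇑(χ i))) x
      rw [Pi.smul_apply, smul_eq_mul]
      by_cases hx : χ i x = 0
      · rw [hx, mul_zero, mul_zero]
      · have : G x = μ i := hg_eq i x hx
        rw [this]
    have key : ∀ i, ((φ.symm G : SB) : H →L[ℂ] H) * p i = μ i • p i := by
      intro i
      have h0 : φ.symm G * P i = μ i • P i := by
        have h := congrArg (⇑φ.symm) (hGχ i)
        rw [starAlgEquiv_map_mul φ.symm, starAlgEquiv_map_smul φ.symm, hχ] at h
        simp only [StarAlgEquiv.symm_apply_apply] at h
        exact h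
      have h1' := congrArg (Subtype.val) h0
      simpa [hP] using h1'
    have hfinal : ((φ.symm G : SB) : H →L[ℂ] H) = d := by
      apply hext
      intro i
      rw [key i, hdpi i]
    rw [← hfinal, ← hSB]
    exact (φ.symm G).2


end RoeCartan
end
end

section
/- Let (X,𝓔) be a bounded geometry coarse space. For each E ∈ 𝓔 meeting each row and each column of X × X at most once, let v^E be the bounded operator on ℓ²(X) whose matrix has (x,y)-entry 1 if (x,y) ∈ E and 0 otherwise. Then each such v^E is a partial isometry of finite propagation (i.e. lying in ℂ_u[X;𝓔]) which normalises ℓ∞(X). Moreover, if S ⊆ 𝓔 is a collection of subsets of X × X, each meeting each row and column at most once, which generates the coarse structure 𝓔, then the set {v^E : E ∈ S} ∪ ℓ∞(X) generates ℂ_u[X;𝓔] as a *-algebra, and hence generates C*_u(X;𝓔) as a C*-algebra. -/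
/- Common definitions for formalising "Cartan subalgebras of uniform Roe algebras"
   (White–Willett).  We model C*-subalgebras of B(H) as norm-closed sets of
   continuous linear operators underlying non-unital star subalgebras. -/

open scoped InnerProductSpace ENNReal
open Filter

noncomputable section

universe u v

namespace RoeCartan



namespace Stmt7

open RoeCartan Complex

variable {X : Type u}

lemma delta_apply_self (x : X) : (delta x : ell2 X) x = 1 := by
  classical
  simp [delta, lp.single_apply]

lemma delta_apply_ne {x y : X} (h : y ≠ x) : (delta x : ell2 X) y = 0 := by
  classical
  simp [delta, lp.single_apply, h]

lemma ell2_inner_eq (f g : ell2 X) : ⟪f, g⟫_ℂ = ∑' x, (starRingEnd ℂ) (f x) * g x := by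
  rw [lp.inner_eq_tsum]; congr 1; funext x; exact RCLike.inner_apply' _ _

lemma inner_delta_left (x : X) (f : ell2 X) : ⟪delta x, f⟫_ℂ = f x := by
  letI := Classical.decEq X
  rw [delta, lp.inner_single_left]
  simp [RCLike.inner_apply]

lemma matEntry_eq_inner (a : ell2 X →L[ℂ] ell2 X) (x y : X) :
    matEntry a x y = ⟪delta x, a (delta y)⟫_ℂ := by
  rw [inner_delta_left]; rfl

lemma norm_delta (x : X) : ‖(delta x : ell2 X)‖ = 1 := by
  letI := Classical.decEq X
  have := lp.norm_single (p := 2) (E := fun _ : X => ℂ) (by norm_num) x (1 : ℂ)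
  rw [delta]
  simpa using this

lemma abs_matEntry_le (a : ell2 X →L[ℂ] ell2 X) (x y : X) : ‖matEntry a x y‖ ≤ ‖a‖ := by
  have h1 : ‖matEntry a x y‖ ≤ ‖a (delta y)‖ :=
    lp.norm_apply_le_norm (by norm_num) (a (delta y)) x
  refine h1.trans ?_
  calc ‖a (delta y)‖ ≤ ‖a‖ * ‖(delta y : ell2 X)‖ := a.le_opNorm _
  _ = ‖a‖ := by rw [norm_delta, mul_one]

/-- Operators are determined by their values on the `delta`s. -/
lemma ext_delta {E : Type*} [NormedAddCommGroup E] [NormedSpace ℂ E]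
    (φ ψ : ell2 X →L[ℂ] E) (h : ∀ y, φ (delta y) = ψ (delta y)) : φ = ψ := by
  classical
  ext f
  have hs : HasSum (fun i : X => lp.single 2 i (f i)) f :=
    lp.hasSum_single ENNReal.ofNat_ne_top f
  have h1 : HasSum (fun i : X => φ (lp.single 2 i (f i))) (φ f) := hs.mapL φ
  have h2 : HasSum (fun i : X => ψ (lp.single 2 i (f i))) (ψ f) := hs.mapL ψ
  have he : ∀ i : X, φ (lp.single 2 i (f i)) = ψ (lp.single 2 i (f i)) := by
    intro i
    have : lp.single (E := fun _ : X => ℂ) 2 i (f i) = f i • delta i := by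
      rw [delta, ← lp.single_smul]
      norm_num
    rw [this, map_smul, map_smul, h i]
  exact h1.unique (by simpa only [he] using h2)

lemma ext_of_matEntry {a b : ell2 X →L[ℂ] ell2 X}
    (h : ∀ x y, matEntry a x y = matEntry b x y) : a = b := by
  refine ext_delta a b fun y => ?_
  apply lp.ext
  funext x
  exact h x y

lemma matEntry_star (a : ell2 X →L[ℂ] ell2 X) (x y : X) :
    matEntry (star a) x y = (starRingEnd ℂ) (matEntry a y x) := by
  rw [matEntry_eq_inner, ContinuousLinearMap.star_eq_adjoint,
    ContinuousLinearMap.adjoint_inner_right]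
  rw [matEntry_eq_inner, ← inner_conj_symm]

lemma matEntry_mul (a b : ell2 X →L[ℂ] ell2 X) (x y : X) :
    matEntry (a * b) x y = ∑' z, matEntry a x z * matEntry b z y := by
  have h0 : matEntry (a * b) x y = ⟪(star a) (delta x), b (delta y)⟫_ℂ := by
    rw [matEntry_eq_inner, ContinuousLinearMap.star_eq_adjoint,
      ContinuousLinearMap.adjoint_inner_left]
    rfl
  rw [h0, ell2_inner_eq]
  congr 1
  funext z
  have h1 : ((star a) (delta x) : ell2 X) z = matEntry (star a) z x := rfl
  rw [h1, matEntry_star, Complex.conj_conj]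
  rfl

lemma matEntry_add (a b : ell2 X →L[ℂ] ell2 X) (x y : X) :
    matEntry (a + b) x y = matEntry a x y + matEntry b x y := rfl

lemma matEntry_zero (x y : X) : matEntry (0 : ell2 X →L[ℂ] ell2 X) x y = 0 := rfl

lemma matEntry_smul (c : ℂ) (a : ell2 X →L[ℂ] ell2 X) (x y : X) :
    matEntry (c • a) x y = c * matEntry a x y := rfl

lemma matEntry_sum {ι : Type*} (s : Finset ι) (a : ι → ell2 X →L[ℂ] ell2 X) (x y : X) :
    matEntry (∑ i ∈ s, a i) x y = ∑ i ∈ s, matEntry (a i) x y := by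
  classical
  induction s using Finset.induction with
  | empty => simp [matEntry_zero]
  | insert _ _ h ih => rw [Finset.sum_insert h, Finset.sum_insert h, matEntry_add, ih]


/-! ### Support lemmas -/

/-- Composition of relations. -/
def Comp (S1 S2 : Set (X × X)) : Set (X × X) :=
  {q | ∃ y, (q.1, y) ∈ S1 ∧ (y, q.2) ∈ S2}

/-- The diagonal. -/
def diagS (X : Type u) : Set (X × X) := {q | q.1 = q.2}

lemma opSupport_star (a : ell2 X →L[ℂ] ell2 X) :
    opSupport (star a) = {q : X × X | (q.2, q.1) ∈ opSupport a} := by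
  ext ⟨x, y⟩
  simp only [opSupport, Set.mem_setOf_eq, matEntry_star, ne_eq, map_eq_zero]

lemma opSupport_mul (a b : ell2 X →L[ℂ] ell2 X) :
    opSupport (a * b) ⊆ Comp (opSupport a) (opSupport b) := by
  rintro ⟨x, y⟩ h
  by_contra hc
  apply h
  simp only [opSupport, Set.mem_setOf_eq, ne_eq, not_not] at *
  rw [matEntry_mul]
  rw [Comp, Set.mem_setOf_eq] at hc
  push_neg at hc
  have : ∀ z : X, matEntry a x z * matEntry b z y = 0 := by
    intro z
    by_cases h1 : matEntry a x z = 0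
    · rw [h1, zero_mul]
    · by_cases h2 : matEntry b z y = 0
      · rw [h2, mul_zero]
      · exact absurd (hc z h1) (fun h => h h2)
  simp only [this, tsum_zero]

lemma opSupport_add (a b : ell2 X →L[ℂ] ell2 X) :
    opSupport (a + b) ⊆ opSupport a ∪ opSupport b := by
  rintro ⟨x, y⟩ h
  by_contra hc
  apply h
  simp only [opSupport, Set.mem_union, Set.mem_setOf_eq, ne_eq, not_or, not_not] at *
  rw [matEntry_add, hc.1, hc.2, add_zero]

lemma opSupport_smul (c : ℂ) (a : ell2 X →L[ℂ] ell2 X) :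
    opSupport (c • a) ⊆ opSupport a := by
  rintro ⟨x, y⟩ h hc
  apply h
  simp only [opSupport, Set.mem_setOf_eq, ne_eq, not_not] at *
  rw [matEntry_smul, hc, mul_zero]

lemma opSupport_zero : opSupport (0 : ell2 X →L[ℂ] ell2 X) = ∅ := by
  ext ⟨x, y⟩
  simp [opSupport, matEntry_zero]

/-! ### Diagonal operators -/

lemma matEntry_isDiagonal {a : ell2 X →L[ℂ] ell2 X} (h : IsDiagonalOp a) {x y : X}
    (hxy : x ≠ y) : matEntry a x y = 0 := by
  obtain ⟨f, hf⟩ := h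
  have := hf (delta y) x
  rw [matEntry, this, delta_apply_ne hxy, mul_zero]

lemma opSupport_subset_diag {a : ell2 X →L[ℂ] ell2 X} (h : IsDiagonalOp a) :
    opSupport a ⊆ diagS X := by
  rintro ⟨x, y⟩ hs
  by_contra hd
  exact hs (matEntry_isDiagonal h hd)

lemma isDiagonalOp_of_supp {a : ell2 X →L[ℂ] ell2 X} (h : opSupport a ⊆ diagS X) :
    IsDiagonalOp a := by
  refine ⟨fun x => matEntry a x x, fun ξ x => ?_⟩
  have key : (innerSL ℂ (delta x)).comp a
      = matEntry a x x • innerSL ℂ (delta x : ell2 X) := by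
    refine ext_delta _ _ fun y => ?_
    simp only [ContinuousLinearMap.comp_apply, ContinuousLinearMap.smul_apply,
      innerSL_apply_apply]
    rw [inner_delta_left, inner_delta_left]
    by_cases hxy : y = x
    · subst hxy
      rw [delta_apply_self]
      change _ = matEntry a y y * 1
      rw [mul_one]
      rfl
    · have h1 : matEntry a x y = 0 := by
        by_contra hne
        have hm : ((x, y) : X × X) ∈ opSupport a := hne
        exact hxy ((h hm).symm)
      rw [delta_apply_ne (fun hh => hxy hh.symm)]
      change matEntry a x y = _
      rw [h1, smul_zero]
  have h1 : (a ξ : X → ℂ) x = ((innerSL ℂ (delta x)).comp a) ξ :=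
    (inner_delta_left x (a ξ)).symm
  rw [h1, key]
  simp only [ContinuousLinearMap.smul_apply, innerSL_apply_apply]
  rw [inner_delta_left]
  rfl


/-! ### Partial bijections and their operators -/

/-- `T` is a partial bijection: each row and each column has at most one element. -/
def IsPB (T : Set (X × X)) : Prop :=
  ∀ x : X, {y | (x, y) ∈ T}.Subsingleton ∧ {y | (y, x) ∈ T}.Subsingleton

lemma IsPB.mono {T T' : Set (X × X)} (h : IsPB T) (hs : T' ⊆ T) : IsPB T' := by
  intro x
  exact ⟨(h x).1.anti (fun y hy => hs hy), (h x).2.anti (fun y hy => hs hy)⟩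

/-- `a` has matrix the indicator function of `T`. -/
def IsInd (T : Set (X × X)) (a : ell2 X →L[ℂ] ell2 X) : Prop :=
  ∀ x y : X, matEntry a x y = T.indicator (fun _ => (1 : ℂ)) (x, y)

lemma IsInd.opSupport_eq {T : Set (X × X)} {a : ell2 X →L[ℂ] ell2 X} (h : IsInd T a) :
    opSupport a = T := by
  ext ⟨x, y⟩
  simp only [opSupport, Set.mem_setOf_eq, h x y]
  constructor
  · intro hne
    by_contra hm
    exact hne (Set.indicator_of_notMem hm _)
  · intro hm
    rw [Set.indicator_of_mem hm]
    exact one_ne_zero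

lemma IsInd.unique {T : Set (X × X)} {a b : ell2 X →L[ℂ] ell2 X} (ha : IsInd T a)
    (hb : IsInd T b) : a = b :=
  ext_of_matEntry fun x y => by rw [ha x y, hb x y]

open Classical in
/-- The action of the partial translation operator on coordinate functions. -/
def pbFun (T : Set (X × X)) (ξ : X → ℂ) (x : X) : ℂ :=
  if h : ∃ y, (x, y) ∈ T then ξ h.choose else 0

open Classical in
lemma pbFun_pos {T : Set (X × X)} {ξ : X → ℂ} {x : X} (h : ∃ y, (x, y) ∈ T) :
    pbFun T ξ x = ξ h.choose := dif_pos h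

open Classical in
lemma pbFun_neg {T : Set (X × X)} {ξ : X → ℂ} {x : X} (h : ¬∃ y, (x, y) ∈ T) :
    pbFun T ξ x = 0 := dif_neg h

lemma pbFun_add (T : Set (X × X)) (ξ η : X → ℂ) (x : X) :
    pbFun T (ξ + η) x = pbFun T ξ x + pbFun T η x := by
  by_cases h : ∃ y, (x, y) ∈ T
  · rw [pbFun_pos h, pbFun_pos h, pbFun_pos h]; rfl
  · rw [pbFun_neg h, pbFun_neg h, pbFun_neg h, add_zero]

lemma pbFun_smul (T : Set (X × X)) (c : ℂ) (ξ : X → ℂ) (x : X) :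
    pbFun T (c • ξ) x = c * pbFun T ξ x := by
  by_cases h : ∃ y, (x, y) ∈ T
  · rw [pbFun_pos h, pbFun_pos h]; rfl
  · rw [pbFun_neg h, pbFun_neg h, mul_zero]

lemma pb_summable {T : Set (X × X)} (hT : IsPB T) (ξ : ell2 X) :
    Summable (fun x => ‖pbFun T (⇑ξ) x‖ ^ (2 : ℝ≥0∞).toReal) ∧
      ∑' x, ‖pbFun T (⇑ξ) x‖ ^ (2 : ℝ≥0∞).toReal
        ≤ ∑' y, ‖(ξ : X → ℂ) y‖ ^ (2 : ℝ≥0∞).toReal := by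
  classical
  set P : ℝ := (2 : ℝ≥0∞).toReal with hP
  have hP2 : P = 2 := by norm_num [hP]
  set D : Set X := {x | ∃ y, (x, y) ∈ T} with hD
  set G : X → ℝ := fun y => ‖(ξ : X → ℂ) y‖ ^ P with hGdef
  have hG : Summable G := (lp.memℓp ξ).summable (by norm_num [hP2])
  set σ : D → X := fun d => (d.2).choose with hσ
  have hσmem : ∀ d : D, (d.1, σ d) ∈ T := fun d => (d.2).choose_spec
  have hσinj : Function.Injective σ := by
    rintro d d' he
    have h1 : (d.1, σ d) ∈ T := hσmem d
    have h2 : (d'.1, σ d) ∈ T := he ▸ hσmem d'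
    exact Subtype.ext ((hT (σ d)).2 h1 h2)
  set F : X → ℝ := fun x => ‖pbFun T (⇑ξ) x‖ ^ P with hFdef
  have hFm : ∀ x ∉ D, F x = 0 := by
    intro x hx
    have : pbFun T (⇑ξ) x = 0 := pbFun_neg hx
    simp [hFdef, this, Real.zero_rpow (by norm_num [hP2] : P ≠ 0)]
  have hFσ : ∀ d : D, F d.1 = G (σ d) := by
    intro d
    have : pbFun T (⇑ξ) d.1 = (ξ : X → ℂ) (σ d) := pbFun_pos d.2
    simp [hFdef, hGdef, this]
  have hFsub : Summable (fun d : D => F d.1) := by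
    have : (fun d : D => F d.1) = G ∘ σ := funext hFσ
    rw [this]
    exact hG.comp_injective hσinj
  have hFc : Summable (fun d : (Dᶜ : Set X) => F d.1) := by
    have : (fun d : (Dᶜ : Set X) => F d.1) = fun _ => 0 :=
      funext fun d => hFm d.1 d.2
    rw [this]
    exact summable_zero
  have hF : Summable F := summable_subtype_and_compl.1 ⟨hFsub, hFc⟩
  refine ⟨hF, ?_⟩
  have hsplit := hF.tsum_subtype_add_tsum_subtype_compl D
  have hzero : ∑' d : (Dᶜ : Set X), F d.1 = 0 := by
    rw [show (fun d : (Dᶜ : Set X) => F d.1) = fun _ => 0 from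
      funext fun d => hFm d.1 d.2]
    exact tsum_zero
  have hmain : ∑' d : D, F d.1 ≤ ∑' y, G y := by
    rw [show (fun d : D => F d.1) = G ∘ σ from funext hFσ]
    exact (hG.comp_injective hσinj).tsum_le_tsum_of_inj σ hσinj
      (fun c _ => Real.rpow_nonneg (norm_nonneg _) _)
      (fun d => le_rfl) hG
  calc ∑' x, F x = ∑' d : D, F d.1 + ∑' d : (Dᶜ : Set X), F d.1 := hsplit.symm
  _ = ∑' d : D, F d.1 := by rw [hzero, add_zero]
  _ ≤ ∑' y, G y := hmain

lemma pb_memℓp {T : Set (X × X)} (hT : IsPB T) (ξ : ell2 X) :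
    Memℓp (pbFun T (⇑ξ)) 2 :=
  memℓp_gen (pb_summable hT ξ).1

/-- The partial translation operator of a partial bijection. -/
def pbOp (T : Set (X × X)) (hT : IsPB T) : ell2 X →L[ℂ] ell2 X :=
  LinearMap.mkContinuous
    { toFun := fun ξ => (⟨pbFun T (⇑ξ), pb_memℓp hT ξ⟩ : ell2 X)
      map_add' := by
        intro ξ η
        apply lp.ext
        funext x
        have : ⇑(ξ + η) = ⇑ξ + ⇑η := lp.coeFn_add ξ η
        change pbFun T (⇑(ξ + η)) x = pbFun T (⇑ξ) x + pbFun T (⇑η) x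
        rw [this, pbFun_add]
      map_smul' := by
        intro c ξ
        apply lp.ext
        funext x
        have : ⇑(c • ξ) = c • ⇑ξ := lp.coeFn_smul c ξ
        change pbFun T (⇑(c • ξ)) x = c * pbFun T (⇑ξ) x
        rw [this, pbFun_smul] }
    1
    (by
      intro ξ
      rw [one_mul]
      refine lp.norm_le_of_tsum_le (by norm_num) (norm_nonneg ξ) ?_
      refine le_trans (pb_summable hT ξ).2 ?_
      rw [← lp.norm_rpow_eq_tsum (by norm_num) ξ])

lemma pbOp_apply {T : Set (X × X)} (hT : IsPB T) (ξ : ell2 X) (x : X) :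
    (pbOp T hT ξ : X → ℂ) x = pbFun T (⇑ξ) x := rfl

lemma isInd_pbOp {T : Set (X × X)} (hT : IsPB T) : IsInd T (pbOp T hT) := by
  intro x y
  rw [matEntry]
  rw [pbOp_apply]
  by_cases hm : (x, y) ∈ T
  · rw [Set.indicator_of_mem hm]
    have hex : ∃ y', (x, y') ∈ T := ⟨y, hm⟩
    rw [pbFun_pos hex]
    have : hex.choose = y := (hT x).1 hex.choose_spec hm
    rw [this, delta_apply_self]
  · rw [Set.indicator_of_notMem hm]
    by_cases hex : ∃ y', (x, y') ∈ T
    · rw [pbFun_pos hex]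
      have : hex.choose ≠ y := fun hh => hm (hh ▸ hex.choose_spec)
      exact delta_apply_ne this
    · exact pbFun_neg hex


/-! ### Multiplication operators -/

lemma mul_memℓp {f : X → ℂ} {C : ℝ} (hC : 0 ≤ C) (hf : ∀ x, ‖f x‖ ≤ C) (ξ : ell2 X) :
    Memℓp (fun x => f x * (ξ : X → ℂ) x) 2 := by
  apply memℓp_gen
  have hG : Summable (fun y => ‖(ξ : X → ℂ) y‖ ^ (2 : ℝ≥0∞).toReal) :=
    (lp.memℓp ξ).summable (by norm_num)
  refine Summable.of_nonneg_of_le (fun x => Real.rpow_nonneg (norm_nonneg _) _)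
    (fun x => ?_) (hG.mul_left (C ^ (2 : ℝ≥0∞).toReal))
  calc ‖f x * (ξ : X → ℂ) x‖ ^ (2 : ℝ≥0∞).toReal
      = (‖f x‖ * ‖(ξ : X → ℂ) x‖) ^ (2 : ℝ≥0∞).toReal := by rw [norm_mul]
    _ ≤ (C * ‖(ξ : X → ℂ) x‖) ^ (2 : ℝ≥0∞).toReal := by
        apply Real.rpow_le_rpow (by positivity)
          (mul_le_mul_of_nonneg_right (hf x) (norm_nonneg _)) (by norm_num)
    _ = C ^ (2 : ℝ≥0∞).toReal * ‖(ξ : X → ℂ) x‖ ^ (2 : ℝ≥0∞).toReal :=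
        Real.mul_rpow hC (norm_nonneg _)

/-- Multiplication operator by a bounded function. -/
def mulOp (f : X → ℂ) {C : ℝ} (hC : 0 ≤ C) (hf : ∀ x, ‖f x‖ ≤ C) :
    ell2 X →L[ℂ] ell2 X :=
  LinearMap.mkContinuous
    { toFun := fun ξ => (⟨fun x => f x * (ξ : X → ℂ) x, mul_memℓp hC hf ξ⟩ : ell2 X)
      map_add' := by
        intro ξ η
        apply lp.ext
        funext x
        change f x * (ξ + η : ell2 X) x = f x * ξ x + f x * η x
        rw [lp.coeFn_add]
        change f x * (⇑ξ x + ⇑η x) = _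
        ring
      map_smul' := by
        intro c ξ
        apply lp.ext
        funext x
        change f x * (c • ξ : ell2 X) x = c * (f x * ξ x)
        rw [lp.coeFn_smul]
        change f x * (c * ⇑ξ x) = _
        ring }
    C
    (by
      intro ξ
      refine lp.norm_le_of_tsum_le (by norm_num) (mul_nonneg hC (norm_nonneg ξ)) ?_
      have hG : Summable (fun y => ‖(ξ : X → ℂ) y‖ ^ (2 : ℝ≥0∞).toReal) :=
        (lp.memℓp ξ).summable (by norm_num)
      have hbd : ∀ x, ‖f x * (ξ : X → ℂ) x‖ ^ (2 : ℝ≥0∞).toReal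
          ≤ C ^ (2 : ℝ≥0∞).toReal * ‖(ξ : X → ℂ) x‖ ^ (2 : ℝ≥0∞).toReal := by
        intro x
        calc ‖f x * (ξ : X → ℂ) x‖ ^ (2 : ℝ≥0∞).toReal
            = (‖f x‖ * ‖(ξ : X → ℂ) x‖) ^ (2 : ℝ≥0∞).toReal := by rw [norm_mul]
          _ ≤ (C * ‖(ξ : X → ℂ) x‖) ^ (2 : ℝ≥0∞).toReal := by
              apply Real.rpow_le_rpow (by positivity)
                (mul_le_mul_of_nonneg_right (hf x) (norm_nonneg _)) (by norm_num)
          _ = C ^ (2 : ℝ≥0∞).toReal * ‖(ξ : X → ℂ) x‖ ^ (2 : ℝ≥0∞).toReal :=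
              Real.mul_rpow hC (norm_nonneg _)
      have hs : Summable (fun x => ‖f x * (ξ : X → ℂ) x‖ ^ (2 : ℝ≥0∞).toReal) :=
        Summable.of_nonneg_of_le (fun x => Real.rpow_nonneg (norm_nonneg _) _) hbd
          (hG.mul_left _)
      calc ∑' x, ‖f x * (ξ : X → ℂ) x‖ ^ (2 : ℝ≥0∞).toReal
          ≤ ∑' x, C ^ (2 : ℝ≥0∞).toReal * ‖(ξ : X → ℂ) x‖ ^ (2 : ℝ≥0∞).toReal :=
            Summable.tsum_le_tsum hbd hs (hG.mul_left _)
        _ = C ^ (2 : ℝ≥0∞).toReal * ∑' x, ‖(ξ : X → ℂ) x‖ ^ (2 : ℝ≥0∞).toReal :=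
            tsum_mul_left
        _ = C ^ (2 : ℝ≥0∞).toReal * ‖ξ‖ ^ (2 : ℝ≥0∞).toReal := by
            rw [← lp.norm_rpow_eq_tsum (by norm_num) ξ]
        _ = (C * ‖ξ‖) ^ (2 : ℝ≥0∞).toReal :=
            (Real.mul_rpow hC (norm_nonneg _)).symm)

lemma mulOp_apply (f : X → ℂ) {C : ℝ} (hC : 0 ≤ C) (hf : ∀ x, ‖f x‖ ≤ C) (ξ : ell2 X)
    (x : X) : (mulOp f hC hf ξ : X → ℂ) x = f x * (ξ : X → ℂ) x := rfl

lemma isDiagonal_mulOp (f : X → ℂ) {C : ℝ} (hC : 0 ≤ C) (hf : ∀ x, ‖f x‖ ≤ C) :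
    IsDiagonalOp (mulOp f hC hf) :=
  ⟨f, fun ξ x => rfl⟩

lemma matEntry_mulOp_mul (f : X → ℂ) {C : ℝ} (hC : 0 ≤ C) (hf : ∀ x, ‖f x‖ ≤ C)
    (a : ell2 X →L[ℂ] ell2 X) (x y : X) :
    matEntry (mulOp f hC hf * a) x y = f x * matEntry a x y := rfl


/-! ### Indicator-operator algebra -/

lemma IsInd.entry_of_mem {T : Set (X × X)} {a : ell2 X →L[ℂ] ell2 X} (h : IsInd T a)
    {x y : X} (hm : (x, y) ∈ T) : matEntry a x y = 1 := by
  rw [h x y, Set.indicator_of_mem hm]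

lemma IsInd.entry_of_not_mem {T : Set (X × X)} {a : ell2 X →L[ℂ] ell2 X} (h : IsInd T a)
    {x y : X} (hm : (x, y) ∉ T) : matEntry a x y = 0 := by
  rw [h x y, Set.indicator_of_notMem hm]

lemma IsInd.mem_of_entry_ne {T : Set (X × X)} {a : ell2 X →L[ℂ] ell2 X} (h : IsInd T a)
    {x y : X} (hne : matEntry a x y ≠ 0) : (x, y) ∈ T := by
  by_contra hm
  exact hne (h.entry_of_not_mem hm)

lemma IsInd.eq_zero {a : ell2 X →L[ℂ] ell2 X} (h : IsInd (∅ : Set (X × X)) a) : a = 0 :=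
  ext_of_matEntry fun x y => by
    rw [h.entry_of_not_mem (Set.notMem_empty _), matEntry_zero]

/-- The projection onto the coordinates in `D`. -/
def chiOp (D : Set X) : ell2 X →L[ℂ] ell2 X :=
  mulOp (D.indicator fun _ => (1 : ℂ)) zero_le_one
    (fun x => by
      by_cases h : x ∈ D
      · rw [Set.indicator_of_mem h]; simp
      · rw [Set.indicator_of_notMem h]; simp)

lemma isDiagonal_chiOp (D : Set X) : IsDiagonalOp (chiOp D) :=
  isDiagonal_mulOp _ _ _

lemma matEntry_chiOp_mul (D : Set X) (a : ell2 X →L[ℂ] ell2 X) (x y : X) :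
    matEntry (chiOp D * a) x y = D.indicator (fun _ => (1 : ℂ)) x * matEntry a x y := rfl

/-- Cutting down an operator with indicator matrix along a subset of its domain. -/
lemma isInd_restrict {T G : Set (X × X)} (hG : IsPB G) (hTG : T ⊆ G)
    {g : ell2 X →L[ℂ] ell2 X} (hg : IsInd G g) :
    IsInd T (chiOp {x | ∃ y, (x, y) ∈ T} * g) := by
  intro x y
  rw [matEntry_chiOp_mul, hg x y]
  by_cases hm : (x, y) ∈ T
  · rw [Set.indicator_of_mem hm, Set.indicator_of_mem (hTG hm),
      Set.indicator_of_mem (show x ∈ {x | ∃ y', (x, y') ∈ T} from ⟨y, hm⟩), one_mul]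
  · rw [Set.indicator_of_notMem hm]
    by_cases hG' : (x, y) ∈ G
    · have hD : ¬∃ y', (x, y') ∈ T := by
        rintro ⟨y', hy'⟩
        have : y' = y := (hG x).1 (hTG hy') hG'
        exact hm (this ▸ hy')
      rw [Set.indicator_of_notMem (show x ∉ {x | ∃ y', (x, y') ∈ T} from hD), zero_mul]
    · rw [Set.indicator_of_notMem hG', mul_zero]

/-- Indicator operators add along disjoint unions. -/
lemma isInd_union {T1 T2 : Set (X × X)} (hdisj : Disjoint T1 T2)
    {a1 a2 : ell2 X →L[ℂ] ell2 X} (h1 : IsInd T1 a1) (h2 : IsInd T2 a2) :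
    IsInd (T1 ∪ T2) (a1 + a2) := by
  intro x y
  rw [matEntry_add]
  by_cases hm1 : (x, y) ∈ T1
  · have hm2 : (x, y) ∉ T2 := fun hm2 => (Set.disjoint_left.1 hdisj) hm1 hm2
    rw [h1.entry_of_mem hm1, h2.entry_of_not_mem hm2,
      Set.indicator_of_mem (Set.mem_union_left _ hm1), add_zero]
  · by_cases hm2 : (x, y) ∈ T2
    · rw [h1.entry_of_not_mem hm1, h2.entry_of_mem hm2,
        Set.indicator_of_mem (Set.mem_union_right _ hm2), zero_add]
    · rw [h1.entry_of_not_mem hm1, h2.entry_of_not_mem hm2,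
        Set.indicator_of_notMem (by simp [hm1, hm2]), add_zero]

/-- Product of indicator operators of partial bijections. -/
lemma isInd_mul_pb {E F : Set (X × X)} (hE : IsPB E)
    {e f : ell2 X →L[ℂ] ell2 X} (he : IsInd E e) (hf : IsInd F f) :
    IsInd (Comp E F) (e * f) := by
  intro x y
  rw [matEntry_mul]
  by_cases hm : (x, y) ∈ Comp E F
  · obtain ⟨z, hz1, hz2⟩ := hm
    rw [Set.indicator_of_mem (show (x, y) ∈ Comp E F from ⟨z, hz1, hz2⟩)]
    rw [tsum_eq_single z ?h]
    · rw [he.entry_of_mem hz1, hf.entry_of_mem hz2, one_mul]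
    case h =>
      intro z' hz'
      by_cases h1 : matEntry e x z' = 0
      · rw [h1, zero_mul]
      · have := he.mem_of_entry_ne h1
        exact absurd ((hE x).1 this hz1) hz'
  · rw [Set.indicator_of_notMem hm]
    have : ∀ z, matEntry e x z * matEntry f z y = 0 := by
      intro z
      by_cases h1 : matEntry e x z = 0
      · rw [h1, zero_mul]
      · by_cases h2 : matEntry f z y = 0
        · rw [h2, mul_zero]
        · exact absurd ⟨z, he.mem_of_entry_ne h1, hf.mem_of_entry_ne h2⟩ hm
    simp only [this, tsum_zero]

/-- The transpose of a relation. -/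
def InvR (T : Set (X × X)) : Set (X × X) := {q | (q.2, q.1) ∈ T}

lemma IsPB.inv {T : Set (X × X)} (h : IsPB T) : IsPB (InvR T) := by
  intro x
  exact ⟨(h x).2, (h x).1⟩

lemma IsInd.star {T : Set (X × X)} {a : ell2 X →L[ℂ] ell2 X} (h : IsInd T a) :
    IsInd (InvR T) (star a) := by
  intro x y
  rw [matEntry_star, h y x]
  by_cases hm : (y, x) ∈ T
  · rw [Set.indicator_of_mem hm, Set.indicator_of_mem (show (x,y) ∈ InvR T from hm)]
    simp
  · rw [Set.indicator_of_notMem hm,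
      Set.indicator_of_notMem (show (x,y) ∉ InvR T from hm)]
    simp

lemma comp_pb_isPB {E F : Set (X × X)} (hE : IsPB E) (hF : IsPB F) : IsPB (Comp E F) := by
  intro x
  constructor
  · intro y hy y' hy'
    obtain ⟨z, hz1, hz2⟩ := hy
    obtain ⟨z', hz1', hz2'⟩ := hy'
    have : z = z' := (hE x).1 hz1 hz1'
    subst this
    exact (hF z).1 hz2 hz2'
  · intro y hy y' hy'
    obtain ⟨z, hz1, hz2⟩ := hy
    obtain ⟨z', hz1', hz2'⟩ := hy'
    have : z = z' := (hF x).2 hz2 hz2'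
    subst this
    exact (hE z).2 hz1 hz1'

/-- Partial isometry property. -/
lemma pb_partial_isometry {T : Set (X × X)} (hT : IsPB T)
    {v : ell2 X →L[ℂ] ell2 X} (hv : IsInd T v) : v * star v * v = v := by
  have hstar : IsInd (InvR T) (star v) := hv.star
  have h1 : IsInd (Comp T (InvR T)) (v * star v) := isInd_mul_pb hT hv hstar
  have h2 : IsInd (Comp (Comp T (InvR T)) T) (v * star v * v) :=
    isInd_mul_pb (comp_pb_isPB hT hT.inv) h1 hv
  have heq : Comp (Comp T (InvR T)) T = T := by
    ext ⟨x, y⟩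
    constructor
    · rintro ⟨z, ⟨w, hw1, hw2⟩, hz2⟩
      have : x = z := (hT w).2 hw1 hw2
      exact this ▸ hz2
    · intro hm
      exact ⟨x, ⟨y, hm, hm⟩, hm⟩
  rw [heq] at h2
  exact h2.unique hv

/-- Conjugating a diagonal operator by an indicator partial isometry is diagonal. -/
lemma pb_normalizes {T : Set (X × X)} (hT : IsPB T)
    {v : ell2 X →L[ℂ] ell2 X} (hv : IsInd T v) {b : ell2 X →L[ℂ] ell2 X}
    (hb : IsDiagonalOp b) :
    IsDiagonalOp (v * b * star v) ∧ IsDiagonalOp (star v * b * v) := by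
  have hsuppv : opSupport v = T := hv.opSupport_eq
  have hsupps : opSupport (star v) = InvR T := hv.star.opSupport_eq
  have hb' : opSupport b ⊆ diagS X := opSupport_subset_diag hb
  constructor
  · refine isDiagonalOp_of_supp ?_
    intro q hq
    obtain ⟨z, hz1, hz2⟩ := opSupport_mul _ _ hq
    obtain ⟨w, hw1, hw2⟩ := opSupport_mul _ _ hz1
    rw [hsuppv] at hw1
    rw [hsupps] at hz2
    have hwz : w = z := hb' hw2
    subst hwz
    exact (hT w).2 hw1 hz2
  · refine isDiagonalOp_of_supp ?_
    intro q hq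
    obtain ⟨z, hz1, hz2⟩ := opSupport_mul _ _ hq
    obtain ⟨w, hw1, hw2⟩ := opSupport_mul _ _ hz1
    rw [hsupps] at hw1
    rw [hsuppv] at hz2
    have hwz : w = z := hb' hw2
    subst hwz
    exact (hT w).1 hw1 hz2


/-! ### Coloring combinatorics -/

lemma exists_injOn_fin {s : Set X} (hs : s.Finite) {k : ℕ} (h : s.ncard ≤ k) :
    ∃ g : X → Fin (k + 1), Set.InjOn g s := by
  classical
  haveI := hs.fintype
  have hcard : Fintype.card s ≤ Fintype.card (Fin (k + 1)) := by
    rw [Fintype.card_fin]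
    have h1 : Fintype.card s = s.ncard := by
      rw [← Nat.card_coe_set_eq, Nat.card_eq_fintype_card]
    omega
  obtain ⟨e⟩ := Function.Embedding.nonempty_of_card_le hcard
  refine ⟨fun x => if hx : x ∈ s then e ⟨x, hx⟩ else ⟨0, Nat.succ_pos k⟩, ?_⟩
  intro x hx x' hx' hee
  have hee' : e ⟨x, hx⟩ = e ⟨x', hx'⟩ := by simpa [dif_pos hx, dif_pos hx'] using hee
  exact Subtype.ext_iff.1 (e.injective hee')

lemma color_decomp {E : Set (X × X)} {k : ℕ}
    (hsl : ∀ x : X, ({y | (x, y) ∈ E}.Finite ∧ {y | (x, y) ∈ E}.ncard ≤ k) ∧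
      ({y | (y, x) ∈ E}.Finite ∧ {y | (y, x) ∈ E}.ncard ≤ k)) :
    ∃ T : Fin (k + 1) × Fin (k + 1) → Set (X × X),
      (∀ c, T c ⊆ E ∧ IsPB (T c)) ∧
      (∀ q ∈ E, ∃ c, q ∈ T c) ∧
      (∀ c c' q, q ∈ T c → q ∈ T c' → c = c') := by
  choose r hr using fun x => exists_injOn_fin ((hsl x).1).1 ((hsl x).1).2
  choose w hw using fun x => exists_injOn_fin ((hsl x).2).1 ((hsl x).2).2
  refine ⟨fun c => {q | q ∈ E ∧ r q.1 q.2 = c.1 ∧ w q.2 q.1 = c.2}, ?_, ?_, ?_⟩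
  · intro c
    refine ⟨fun q hq => hq.1, fun x => ⟨?_, ?_⟩⟩
    · intro y hy y' hy'
      exact hr x hy.1 hy'.1 (hy.2.1.trans hy'.2.1.symm)
    · intro y hy y' hy'
      exact hw x hy.1 hy'.1 (hy.2.2.trans hy'.2.2.symm)
  · intro q hq
    exact ⟨(r q.1 q.2, w q.2 q.1), hq, rfl, rfl⟩
  · rintro c c' q ⟨_, h1, h2⟩ ⟨_, h1', h2'⟩
    exact Prod.ext (h1.symm.trans h1') (h2.symm.trans h2')

/-! ### Membership in star subalgebras -/

lemma ind_mem_of_subset_list (A : NonUnitalStarSubalgebra ℂ (ell2 X →L[ℂ] ell2 X))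
    (hA : LinfOps X ⊆ A) (L : List (Set (X × X)))
    (hL : ∀ G ∈ L, IsPB G ∧ ∀ g : ell2 X →L[ℂ] ell2 X, IsInd G g → g ∈ A) :
    ∀ T : Set (X × X), IsPB T → (T ⊆ {q | ∃ G ∈ L, q ∈ G}) →
      ∀ v : ell2 X →L[ℂ] ell2 X, IsInd T v → v ∈ A := by
  induction L with
  | nil =>
    intro T _ hsub v hv
    have hTe : T = ∅ := by
      rw [Set.eq_empty_iff_forall_notMem]
      intro q hq
      obtain ⟨G, hG, _⟩ := hsub hq
      exact List.not_mem_nil hG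
    subst hTe
    rw [hv.eq_zero]
    exact zero_mem A
  | cons G L ih =>
    intro T hT hsub v hv
    have hG : IsPB G := (hL G List.mem_cons_self).1
    have hGA := (hL G List.mem_cons_self).2
    have hLA : ∀ G' ∈ L, IsPB G' ∧ ∀ g : ell2 X →L[ℂ] ell2 X, IsInd G' g → g ∈ A :=
      fun G' hG' => hL G' (List.mem_cons_of_mem G hG')
    have hT1sub : T ∩ G ⊆ G := Set.inter_subset_right
    have h1 : IsInd (T ∩ G) (chiOp {x | ∃ y, (x, y) ∈ T ∩ G} * pbOp G hG) :=
      isInd_restrict hG hT1sub (isInd_pbOp hG)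
    have h1A : chiOp {x | ∃ y, (x, y) ∈ T ∩ G} * pbOp G hG ∈ A :=
      mul_mem (hA (isDiagonal_chiOp _)) (hGA _ (isInd_pbOp hG))
    have hT2 : IsPB (T \ G) := hT.mono Set.diff_subset
    have h2 : IsInd (T \ G) (pbOp (T \ G) hT2) := isInd_pbOp hT2
    have h2A : pbOp (T \ G) hT2 ∈ A := by
      refine ih hLA (T \ G) hT2 ?_ _ h2
      intro q hq
      obtain ⟨G', hG', hqG'⟩ := hsub hq.1
      rcases List.mem_cons.1 hG' with h | h
      · exact absurd (h ▸ hqG') hq.2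
      · exact ⟨G', h, hqG'⟩
    have hdisj : Disjoint (T ∩ G) (T \ G) :=
      Set.disjoint_of_subset_left Set.inter_subset_right Set.disjoint_sdiff_right
    have hunion := isInd_union hdisj h1 h2
    rw [Set.inter_union_diff] at hunion
    rw [← hunion.unique hv]
    exact add_mem h1A h2A

open Classical in
/-- Any operator supported on a bounded geometry entourage whose partial bijections act by
operators in `A` is itself in `A`. -/
lemma mem_of_supported (A : NonUnitalStarSubalgebra ℂ (ell2 X →L[ℂ] ell2 X))
    (hA : LinfOps X ⊆ A) {E : Set (X × X)} {k : ℕ}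
    (hsl : ∀ x : X, ({y | (x, y) ∈ E}.Finite ∧ {y | (x, y) ∈ E}.ncard ≤ k) ∧
      ({y | (y, x) ∈ E}.Finite ∧ {y | (y, x) ∈ E}.ncard ≤ k))
    (hpb : ∀ T ⊆ E, IsPB T → ∀ g : ell2 X →L[ℂ] ell2 X, IsInd T g → g ∈ A)
    {a : ell2 X →L[ℂ] ell2 X} (ha : opSupport a ⊆ E) : a ∈ A := by
  obtain ⟨T, hT, hcover, huniq⟩ := color_decomp hsl
  set f : (Fin (k + 1) × Fin (k + 1)) → X → ℂ := fun c x =>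
    if h : ∃ y, (x, y) ∈ T c then matEntry a x h.choose else 0 with hf
  have hfb : ∀ c x, ‖f c x‖ ≤ ‖a‖ := by
    intro c x
    by_cases hex : ∃ y, (x, y) ∈ T c
    · have h1 : f c x = matEntry a x hex.choose := dif_pos hex
      rw [h1]
      exact abs_matEntry_le a x _
    · have h1 : f c x = 0 := dif_neg hex
      rw [h1, norm_zero]
      exact norm_nonneg a
  set ac : (Fin (k + 1) × Fin (k + 1)) → (ell2 X →L[ℂ] ell2 X) := fun c =>
    mulOp (f c) (norm_nonneg a) (hfb c) * pbOp (T c) (hT c).2 with hac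
  have hacA : ∀ c, ac c ∈ A := fun c =>
    mul_mem (hA (isDiagonal_mulOp _ _ _))
      (hpb (T c) (hT c).1 (hT c).2 _ (isInd_pbOp (hT c).2))
  have hentry : ∀ c x y, matEntry (ac c) x y
      = if (x, y) ∈ T c then matEntry a x y else 0 := by
    intro c x y
    rw [hac]
    have h0 : matEntry (mulOp (f c) (norm_nonneg a) (hfb c) * pbOp (T c) (hT c).2) x y
        = f c x * matEntry (pbOp (T c) (hT c).2) x y := rfl
    rw [h0]
    by_cases hm : (x, y) ∈ T c
    · rw [(isInd_pbOp (hT c).2).entry_of_mem hm, if_pos hm, mul_one]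
      have hex : ∃ y', (x, y') ∈ T c := ⟨y, hm⟩
      have h1 : f c x = matEntry a x hex.choose := dif_pos hex
      rw [h1]
      congr 1
      exact ((hT c).2 x).1 hex.choose_spec hm
    · rw [(isInd_pbOp (hT c).2).entry_of_not_mem hm, if_neg hm, mul_zero]
  have hsum : a = ∑ c : Fin (k + 1) × Fin (k + 1), ac c := by
    refine ext_of_matEntry fun x y => ?_
    rw [matEntry_sum]
    by_cases hE : (x, y) ∈ E
    · obtain ⟨c0, hc0⟩ := hcover _ hE
      rw [Finset.sum_eq_single c0]
      · rw [hentry, if_pos hc0]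
      · intro c _ hc
        rw [hentry]
        by_cases hm : (x, y) ∈ T c
        · exact absurd (huniq c c0 _ hm hc0) hc
        · rw [if_neg hm]
      · intro hmem
        exact absurd (Finset.mem_univ c0) hmem
    · have hz : matEntry a x y = 0 := by
        by_contra hne
        exact hE (ha hne)
      rw [hz]
      refine (Finset.sum_eq_zero fun c _ => ?_).symm
      rw [hentry]
      by_cases hm : (x, y) ∈ T c
      · exact absurd ((hT c).1 hm) hE
      · rw [if_neg hm]
  rw [hsum]
  exact sum_mem (fun c _ => hacA c)


/-! ### The subalgebra of operators supported on entourages -/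

/-- Operators supported on entourages of `𝓔` form a star subalgebra. -/
def suppAlg (𝓔 : CoarseStructure X) : NonUnitalStarSubalgebra ℂ (ell2 X →L[ℂ] ell2 X) where
  carrier := {a | opSupport a ∈ 𝓔.sets}
  add_mem' := fun {a} {b} ha hb =>
    𝓔.subset_mem (𝓔.union_mem ha hb) (opSupport_add a b)
  zero_mem' := by
    have : opSupport (0 : ell2 X →L[ℂ] ell2 X) ⊆ {q : X × X | q.1 = q.2} := by
      rw [opSupport_zero]
      exact Set.empty_subset _
    exact 𝓔.subset_mem 𝓔.diag_mem this
  mul_mem' := fun {a} {b} ha hb =>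
    𝓔.subset_mem (𝓔.comp_mem ha hb) (opSupport_mul a b)
  smul_mem' := fun c a ha => 𝓔.subset_mem ha (opSupport_smul c a)
  star_mem' := fun {a} ha => by
    have := 𝓔.inv_mem ha
    simpa [opSupport_star] using this

/-! ### The stability predicate -/

variable (A : NonUnitalStarSubalgebra ℂ (ell2 X →L[ℂ] ell2 X))

/-- All partial translations inside `E` act by operators in `A`. -/
def Stab (E : Set (X × X)) : Prop :=
  ∀ T ⊆ E, IsPB T → ∀ v : ell2 X →L[ℂ] ell2 X, IsInd T v → v ∈ A

lemma stab_subset {E F : Set (X × X)} (hE : Stab A E) (hsub : F ⊆ E) : Stab A F :=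
  fun T hT hTpb v hv => hE T (hT.trans hsub) hTpb v hv

lemma stab_diag (hA : LinfOps X ⊆ A) : Stab A {q : X × X | q.1 = q.2} := by
  intro T hsub _ v hv
  apply hA
  refine isDiagonalOp_of_supp ?_
  rw [hv.opSupport_eq]
  exact hsub

lemma stab_union (hA : LinfOps X ⊆ A) {E F : Set (X × X)} (hE : Stab A E) (hF : Stab A F) :
    Stab A (E ∪ F) := by
  intro T hsub hT v hv
  have h1pb : IsPB (T ∩ E) := hT.mono Set.inter_subset_left
  have h2pb : IsPB (T \ E) := hT.mono Set.diff_subset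
  have h2sub : T \ E ⊆ F := by
    rintro q ⟨hq1, hq2⟩
    rcases hsub hq1 with h | h
    · exact absurd h hq2
    · exact h
  have h1A : pbOp (T ∩ E) h1pb ∈ A :=
    hE _ Set.inter_subset_right h1pb _ (isInd_pbOp h1pb)
  have h2A : pbOp (T \ E) h2pb ∈ A := hF _ h2sub h2pb _ (isInd_pbOp h2pb)
  have hdisj : Disjoint (T ∩ E) (T \ E) :=
    Set.disjoint_of_subset_left Set.inter_subset_right Set.disjoint_sdiff_right
  have hunion := isInd_union hdisj (isInd_pbOp h1pb) (isInd_pbOp h2pb)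
  rw [Set.inter_union_diff] at hunion
  rw [← hunion.unique hv]
  exact add_mem h1A h2A

lemma stab_inv {E : Set (X × X)} (hE : Stab A E) :
    Stab A {q : X × X | (q.2, q.1) ∈ E} := by
  intro T hsub hT v hv
  have hsub' : InvR T ⊆ E := fun q hq => hsub hq
  have hstarA : star v ∈ A := hE _ hsub' hT.inv _ hv.star
  have : v = star (star v) := (star_star v).symm
  rw [this]
  exact star_mem hstarA

open Classical in
lemma stab_comp (hA : LinfOps X ⊆ A) {E F : Set (X × X)} {kE kF : ℕ}
    (hslE : ∀ x : X, ({y | (x, y) ∈ E}.Finite ∧ {y | (x, y) ∈ E}.ncard ≤ kE) ∧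
      ({y | (y, x) ∈ E}.Finite ∧ {y | (y, x) ∈ E}.ncard ≤ kE))
    (hslF : ∀ x : X, ({y | (x, y) ∈ F}.Finite ∧ {y | (x, y) ∈ F}.ncard ≤ kF) ∧
      ({y | (y, x) ∈ F}.Finite ∧ {y | (y, x) ∈ F}.ncard ≤ kF))
    (hE : Stab A E) (hF : Stab A F) : Stab A (Comp E F) := by
  intro T hsub hT v hv
  -- choose middle points
  set Yt : X × X → X := fun q => if h : q ∈ T then (hsub h).choose else q.1 with hYt
  have hY : ∀ q (h : q ∈ T), (q.1, Yt q) ∈ E ∧ (Yt q, q.2) ∈ F := by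
    intro q h
    have h1 : Yt q = (hsub h).choose := dif_pos h
    rw [h1]
    exact (hsub h).choose_spec
  set E' : Set (X × X) := (fun q => (q.1, Yt q)) '' T with hE'
  set F' : Set (X × X) := (fun q => (Yt q, q.2)) '' T with hF'
  have hE'sub : E' ⊆ E := by
    rintro _ ⟨q, hq, rfl⟩
    exact (hY q hq).1
  have hF'sub : F' ⊆ F := by
    rintro _ ⟨q, hq, rfl⟩
    exact (hY q hq).2
  have hslE' : ∀ x : X, ({y | (x, y) ∈ E'}.Finite ∧ {y | (x, y) ∈ E'}.ncard ≤ kE) ∧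
      ({y | (y, x) ∈ E'}.Finite ∧ {y | (y, x) ∈ E'}.ncard ≤ kE) := by
    intro x
    have hr : {y | (x, y) ∈ E'} ⊆ {y | (x, y) ∈ E} := fun y hy => hE'sub hy
    have hc : {y | (y, x) ∈ E'} ⊆ {y | (y, x) ∈ E} := fun y hy => hE'sub hy
    exact ⟨⟨((hslE x).1).1.subset hr,
        le_trans (Set.ncard_le_ncard hr ((hslE x).1).1) ((hslE x).1).2⟩,
      ⟨((hslE x).2).1.subset hc,
        le_trans (Set.ncard_le_ncard hc ((hslE x).2).1) ((hslE x).2).2⟩⟩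
  have hslF' : ∀ x : X, ({y | (x, y) ∈ F'}.Finite ∧ {y | (x, y) ∈ F'}.ncard ≤ kF) ∧
      ({y | (y, x) ∈ F'}.Finite ∧ {y | (y, x) ∈ F'}.ncard ≤ kF) := by
    intro x
    have hr : {y | (x, y) ∈ F'} ⊆ {y | (x, y) ∈ F} := fun y hy => hF'sub hy
    have hc : {y | (y, x) ∈ F'} ⊆ {y | (y, x) ∈ F} := fun y hy => hF'sub hy
    exact ⟨⟨((hslF x).1).1.subset hr,
        le_trans (Set.ncard_le_ncard hr ((hslF x).1).1) ((hslF x).1).2⟩,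
      ⟨((hslF x).2).1.subset hc,
        le_trans (Set.ncard_le_ncard hc ((hslF x).2).1) ((hslF x).2).2⟩⟩
  obtain ⟨TE, hTE, hTEcov, _⟩ := color_decomp hslE'
  obtain ⟨TF, hTF, hTFcov, _⟩ := color_decomp hslF'
  -- the composed partial bijections
  set G : (Fin (kE + 1) × Fin (kE + 1)) × (Fin (kF + 1) × Fin (kF + 1)) → Set (X × X) :=
    fun p => Comp (TE p.1) (TF p.2) with hG
  have hGpb : ∀ p, IsPB (G p) := fun p => comp_pb_isPB (hTE p.1).2 (hTF p.2).2
  have hGA : ∀ p, ∀ g : ell2 X →L[ℂ] ell2 X, IsInd (G p) g → g ∈ A := by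
    intro p g hg
    have h1 : pbOp (TE p.1) (hTE p.1).2 ∈ A :=
      hE _ ((hTE p.1).1.trans hE'sub) (hTE p.1).2 _ (isInd_pbOp (hTE p.1).2)
    have h2 : pbOp (TF p.2) (hTF p.2).2 ∈ A :=
      hF _ ((hTF p.2).1.trans hF'sub) (hTF p.2).2 _ (isInd_pbOp (hTF p.2).2)
    have h3 : IsInd (G p) (pbOp (TE p.1) (hTE p.1).2 * pbOp (TF p.2) (hTF p.2).2) :=
      isInd_mul_pb (hTE p.1).2 (isInd_pbOp (hTE p.1).2) (isInd_pbOp (hTF p.2).2)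
    rw [hg.unique h3]
    exact mul_mem h1 h2
  -- cover `T`
  set L : List (Set (X × X)) :=
    ((Finset.univ : Finset ((Fin (kE + 1) × Fin (kE + 1)) ×
      (Fin (kF + 1) × Fin (kF + 1)))).toList).map G with hL
  have hLprop : ∀ G' ∈ L, IsPB G' ∧ ∀ g : ell2 X →L[ℂ] ell2 X, IsInd G' g → g ∈ A := by
    intro G' hG'
    obtain ⟨p, _, rfl⟩ := List.mem_map.1 hG'
    exact ⟨hGpb p, hGA p⟩
  refine ind_mem_of_subset_list A hA L hLprop T hT ?_ v hv
  intro q hq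
  have hqE' : (q.1, Yt q) ∈ E' := ⟨q, hq, rfl⟩
  have hqF' : (Yt q, q.2) ∈ F' := ⟨q, hq, rfl⟩
  obtain ⟨i, hi⟩ := hTEcov _ hqE'
  obtain ⟨j, hj⟩ := hTFcov _ hqF'
  refine ⟨G (i, j), ?_, ?_⟩
  · rw [hL]
    exact List.mem_map.2 ⟨(i, j), Finset.mem_toList.2 (Finset.mem_univ _), rfl⟩
  · exact ⟨Yt q, hi, hj⟩


end Stmt7

open Stmt7 in
/-- The partial isometries `v^E` lie in `ℂ_u[X;𝓔]`, normalise `ℓ∞(X)`, and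
(for `S` generating `𝓔`) together with `ℓ∞(X)` generate `ℂ_u[X;𝓔]` as a *-algebra, hence
`C*_u(X;𝓔)` as a C*-algebra. -/
theorem stmt7 {X : Type u} (𝓔 : CoarseStructure X) (hbg : 𝓔.BoundedGeometry) :
    (∀ E ∈ 𝓔.sets,
      (∀ x : X, {y : X | (x, y) ∈ E}.Subsingleton ∧ {y : X | (y, x) ∈ E}.Subsingleton) →
      (∃ a : ell2 X →L[ℂ] ell2 X,
        ∀ x y : X, matEntry a x y = E.indicator (fun _ => (1 : ℂ)) (x, y)) ∧
      ∀ a : ell2 X →L[ℂ] ell2 X,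
        (∀ x y : X, matEntry a x y = E.indicator (fun _ => (1 : ℂ)) (x, y)) →
        a * star a * a = a ∧ opSupport a ∈ 𝓔.sets ∧
        ∀ b ∈ LinfOps X, a * b * star a ∈ LinfOps X ∧ star a * b * a ∈ LinfOps X) ∧
    ∀ S : Set (Set (X × X)),
      (∀ E ∈ S, ∀ x : X,
        {y : X | (x, y) ∈ E}.Subsingleton ∧ {y : X | (y, x) ∈ E}.Subsingleton) →
      𝓔.IsGeneratedBy S →
      ((NonUnitalStarAlgebra.adjoin ℂ
          ({a : ell2 X →L[ℂ] ell2 X |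
              ∃ E ∈ S, ∀ x y : X, matEntry a x y = E.indicator (fun _ => (1 : ℂ)) (x, y)}
            ∪ LinfOps X) :
          NonUnitalStarSubalgebra ℂ (ell2 X →L[ℂ] ell2 X)) : Set (ell2 X →L[ℂ] ell2 X))
        = {a : ell2 X →L[ℂ] ell2 X | opSupport a ∈ 𝓔.sets} ∧
      CstarGen
          ({a : ell2 X →L[ℂ] ell2 X |
              ∃ E ∈ S, ∀ x y : X, matEntry a x y = E.indicator (fun _ => (1 : ℂ)) (x, y)}
            ∪ LinfOps X)
        = CoarseRoeAlgebra X 𝓔 := by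
  constructor
  · intro E hE h
    have hpb : IsPB E := h
    refine ⟨⟨pbOp E hpb, isInd_pbOp hpb⟩, ?_⟩
    intro a ha
    have hv : IsInd E a := ha
    refine ⟨pb_partial_isometry hpb hv, ?_, ?_⟩
    · rw [hv.opSupport_eq]
      exact hE
    · intro b hb
      exact pb_normalizes hpb hv hb
  · intro S hS hgen
    suffices heq1 : ((NonUnitalStarAlgebra.adjoin ℂ
          ({a : ell2 X →L[ℂ] ell2 X |
              ∃ E ∈ S, ∀ x y : X, matEntry a x y = E.indicator (fun _ => (1 : ℂ)) (x, y)}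
            ∪ LinfOps X) :
          NonUnitalStarSubalgebra ℂ (ell2 X →L[ℂ] ell2 X)) : Set (ell2 X →L[ℂ] ell2 X))
        = {a : ell2 X →L[ℂ] ell2 X | opSupport a ∈ 𝓔.sets} by
      refine ⟨heq1, ?_⟩
      unfold CstarGen CoarseRoeAlgebra
      rw [heq1]
    set gens : Set (ell2 X →L[ℂ] ell2 X) :=
      {a : ell2 X →L[ℂ] ell2 X |
          ∃ E ∈ S, ∀ x y : X, matEntry a x y = E.indicator (fun _ => (1 : ℂ)) (x, y)}
        ∪ LinfOps X with hgens
    set A : NonUnitalStarSubalgebra ℂ (ell2 X →L[ℂ] ell2 X) :=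
      NonUnitalStarAlgebra.adjoin ℂ gens with hAdef
    have hLinf : LinfOps X ⊆ (A : Set (ell2 X →L[ℂ] ell2 X)) := fun b hb =>
      NonUnitalStarAlgebra.subset_adjoin ℂ gens (Or.inr hb)
    have hsubset : (A : Set (ell2 X →L[ℂ] ell2 X))
        ⊆ {a : ell2 X →L[ℂ] ell2 X | opSupport a ∈ 𝓔.sets} := by
      have hle : A ≤ suppAlg 𝓔 := by
        apply NonUnitalStarAlgebra.adjoin_le
        rintro a (⟨E, hES, hInd⟩ | hdiag)
        · show opSupport a ∈ 𝓔.sets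
          rw [(show IsInd E a from hInd).opSupport_eq]
          exact hgen.1 hES
        · exact 𝓔.subset_mem 𝓔.diag_mem (opSupport_subset_diag hdiag)
      exact fun a ha => hle ha
    have hstabS : ∀ E ∈ S, Stab A E := by
      intro E hES T hsub hT v hv
      have hEpb : IsPB E := hS E hES
      have hgenmem : pbOp E hEpb ∈ A :=
        NonUnitalStarAlgebra.subset_adjoin ℂ gens (Or.inl ⟨E, hES, isInd_pbOp hEpb⟩)
      have h1 := isInd_restrict hEpb hsub (isInd_pbOp hEpb)
      rw [← h1.unique hv]
      exact mul_mem (hLinf (isDiagonal_chiOp _)) hgenmem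
    set 𝓓 : CoarseStructure X :=
      { sets := {E | E ∈ 𝓔.sets ∧ Stab A E}
        diag_mem := ⟨𝓔.diag_mem, stab_diag A hLinf⟩
        union_mem := fun {E} {F} hE hF =>
          ⟨𝓔.union_mem hE.1 hF.1, stab_union A hLinf hE.2 hF.2⟩
        comp_mem := fun {E} {F} hE hF => by
          obtain ⟨kE, hkE⟩ := hbg E hE.1
          obtain ⟨kF, hkF⟩ := hbg F hF.1
          exact ⟨𝓔.comp_mem hE.1 hF.1, stab_comp A hLinf hkE hkF hE.2 hF.2⟩
        inv_mem := fun {E} hE => ⟨𝓔.inv_mem hE.1, stab_inv A hE.2⟩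
        subset_mem := fun {E} {F} hE hsub =>
          ⟨𝓔.subset_mem hE.1 hsub, stab_subset A hE.2 hsub⟩ } with h𝓓
    have hDS : S ⊆ 𝓓.sets := fun E hES => ⟨hgen.1 hES, hstabS E hES⟩
    have h𝓔𝓓 := hgen.2 𝓓 hDS
    have hsuperset : {a : ell2 X →L[ℂ] ell2 X | opSupport a ∈ 𝓔.sets}
        ⊆ (A : Set (ell2 X →L[ℂ] ell2 X)) := by
      intro a ha
      obtain ⟨k, hk⟩ := hbg _ ha
      have hDmem := h𝓔𝓓 ha
      exact mem_of_supported A hLinf hk hDmem.2 (subset_refl _)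
    exact Set.Subset.antisymm hsubset hsuperset


end RoeCartan
end
end

section
/- Let H be a Hilbert space, let A ⊆ B(H) be a unital C*-subalgebra containing all compact operators K(H), and let B ⊆ A be a Cartan subalgebra. Let X = {p_x} be the set of minimal projections of B, for each x ∈ X choose a unit vector ξ_x in the range of p_x (so {ξ_x}_{x∈X} is an orthonormal basis of H), and let u : ℓ²(X) → H be the unitary with u δ_x = ξ_x. Let 𝓔_A be the coarse structure on X generated by the sets E_{a,ε} = {(x,y) : ‖p_x a p_y‖ ≥ ε} for a ∈ N_A(B), ε > 0. Then u* B u ⊆ ℓ∞(X) and u* A u ⊆ C*_u(X; 𝓔_A). -/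
/- Common definitions for formalising "Cartan subalgebras of uniform Roe algebras"
   (White–Willett).  We model C*-subalgebras of B(H) as norm-closed sets of
   continuous linear operators underlying non-unital star subalgebras. -/

open scoped InnerProductSpace ENNReal
open Filter

noncomputable section

universe u v

namespace RoeCartan


/-! ### Auxiliary lemmas for stmt10 -/

section Ell2Aux

variable {X : Type v}

lemma delta_apply_self (x : X) : (delta x : ell2 X) x = 1 := by
  letI := Classical.decEq X
  unfold delta
  rw [lp.single_apply, Pi.single_eq_same]

lemma delta_apply_ne {x y : X} (h : y ≠ x) : (delta x : ell2 X) y = 0 := by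
  letI := Classical.decEq X
  unfold delta
  rw [lp.single_apply, Pi.single_eq_of_ne h]

lemma inner_delta_left (x : X) (f : ell2 X) : ⟪(delta x : ell2 X), f⟫_ℂ = f x := by
  letI := Classical.decEq X
  unfold delta
  rw [lp.inner_single_left]
  simp

lemma norm_delta (x : X) : ‖(delta x : ell2 X)‖ = 1 := by
  classical
  unfold delta
  have h2 : (0:ℝ) < (2:ℝ≥0∞).toReal := by norm_num
  simpa using lp.norm_single (E := fun _ : X => ℂ) h2 (fun _ : X => (1:ℂ)) x

lemma smul_coord (c : ℂ) (f : ell2 X) (x : X) : (c • f) x = c * f x := rfl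

lemma hasSum_delta (f : ell2 X) : HasSum (fun y => f y • (delta y : ell2 X)) f := by
  classical
  have h := lp.hasSum_single (E := fun _ : X => ℂ) (p := 2) (by norm_num) f
  have e : (fun y => f y • (delta y : ell2 X)) = fun y => lp.single 2 y (f y) := by
    funext y
    apply lp.ext; funext z
    rw [smul_coord, lp.single_apply, Pi.single_apply]
    split_ifs with hz
    · subst hz; rw [delta_apply_self, mul_one]
    · rw [delta_apply_ne hz, mul_zero]
  rw [e]
  exact h

lemma hasSum_apply {ι : Type*} {g : ι → ell2 X} {f : ell2 X} (h : HasSum g f) (x : X) :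
    HasSum (fun y => g y x) (f x) := by
  have h2 := h.mapL (innerSL ℂ (delta x : ell2 X))
  simpa only [innerSL_apply_apply, inner_delta_left] using h2

lemma matEntry_eq_inner (a : ell2 X →L[ℂ] ell2 X) (x y : X) :
    matEntry a x y = ⟪(delta x : ell2 X), a (delta y)⟫_ℂ := by
  rw [inner_delta_left]; rfl

lemma matEntry_add (a b : ell2 X →L[ℂ] ell2 X) (x y : X) :
    matEntry (a + b) x y = matEntry a x y + matEntry b x y := rfl

lemma matEntry_smul (c : ℂ) (a : ell2 X →L[ℂ] ell2 X) (x y : X) :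
    matEntry (c • a) x y = c * matEntry a x y := rfl

lemma matEntry_star (a : ell2 X →L[ℂ] ell2 X) (x y : X) :
    matEntry (star a) x y = starRingEnd ℂ (matEntry a y x) := by
  rw [matEntry_eq_inner, matEntry_eq_inner, ContinuousLinearMap.star_eq_adjoint,
    ContinuousLinearMap.adjoint_inner_right, ← inner_conj_symm]

lemma matEntry_mul (a b : ell2 X →L[ℂ] ell2 X) (x y : X) :
    HasSum (fun z => (b (delta y)) z * matEntry a x z) (matEntry (a * b) x y) := by
  have h1 := (hasSum_delta (b (delta y))).mapL a
  have h2 := hasSum_apply h1 x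
  have e : (fun z => (b (delta y)) z * matEntry a x z)
      = fun z => (a ((b (delta y)) z • delta z)) x := by
    funext z
    rw [map_smul, smul_coord]
    rfl
  rw [e]
  convert h2 using 1
  rfl

lemma diag_apply_of_offDiag {a : ell2 X →L[ℂ] ell2 X}
    (h : ∀ x y, x ≠ y → matEntry a x y = 0) (f : ell2 X) (x : X) :
    a f x = matEntry a x x * f x := by
  have h2 := hasSum_apply ((hasSum_delta f).mapL a) x
  have h3 : HasSum (fun y => f y * matEntry a x y) (a f x) := by
    have e : (fun y => f y * matEntry a x y) = fun y => (a (f y • delta y)) x := by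
      funext y
      rw [map_smul, smul_coord]
      rfl
    rw [e]
    exact h2
  have h4 : HasSum (fun y => f y * matEntry a x y) (f x * matEntry a x x) :=
    hasSum_single x (fun y hy => by rw [h x y (Ne.symm hy), mul_zero])
  rw [h3.unique h4]; ring

lemma isDiagonalOp_of_offDiag {a : ell2 X →L[ℂ] ell2 X}
    (h : ∀ x y, x ≠ y → matEntry a x y = 0) : IsDiagonalOp a :=
  ⟨fun x => matEntry a x x, fun f x => diag_apply_of_offDiag h f x⟩

lemma matEntry_of_diag {a : ell2 X →L[ℂ] ell2 X} (h : IsDiagonalOp a)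
    {x y : X} (hxy : x ≠ y) : matEntry a x y = 0 := by
  obtain ⟨f, hf⟩ := h
  have h1 : matEntry a x y = f x * (delta y : ell2 X) x := hf (delta y) x
  rw [h1, delta_apply_ne hxy, mul_zero]

end Ell2Aux

section ConjAux

variable {H : Type u} [NormedAddCommGroup H] [InnerProductSpace ℂ H] [CompleteSpace H]
variable {X : Type v} (u : ell2 X ≃ₗᵢ[ℂ] H)

lemma conjDown_apply (a : H →L[ℂ] H) (f : ell2 X) :
    conjDown u a f = u.symm (a (u f)) := rfl

lemma symm_apply_coord (v : H) (x : X) :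
    (u.symm v) x = ⟪u (delta x), v⟫_ℂ := by
  have h := inner_delta_left x (u.symm v)
  rw [← h, ← LinearIsometryEquiv.inner_map_map u, u.apply_symm_apply]

lemma matEntry_conjDown (a : H →L[ℂ] H) (x y : X) :
    matEntry (conjDown u a) x y = ⟪u (delta x), a (u (delta y))⟫_ℂ := by
  show (conjDown u a (delta y)) x = _
  rw [conjDown_apply, symm_apply_coord]

lemma conjDown_add (a b : H →L[ℂ] H) :
    conjDown u (a + b) = conjDown u a + conjDown u b := by
  ext f
  simp [conjDown_apply]

lemma conjDown_smul (c : ℂ) (a : H →L[ℂ] H) :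
    conjDown u (c • a) = c • conjDown u a := by
  ext f
  simp [conjDown_apply]

lemma conjDown_zero : conjDown u (0 : H →L[ℂ] H) = 0 := by
  ext f
  simp [conjDown_apply]

lemma conjDown_mul (a b : H →L[ℂ] H) :
    conjDown u (a * b) = conjDown u a * conjDown u b := by
  ext f
  simp [conjDown_apply, ContinuousLinearMap.mul_apply, u.apply_symm_apply]

lemma conjDown_star (a : H →L[ℂ] H) :
    conjDown u (star a) = star (conjDown u a) := by
  rw [ContinuousLinearMap.star_eq_adjoint]
  refine (ContinuousLinearMap.eq_adjoint_iff _ _).2 fun f g => ?_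
  rw [conjDown_apply, conjDown_apply]
  calc ⟪u.symm (star a (u f)), g⟫_ℂ
      = ⟪u (u.symm (star a (u f))), u g⟫_ℂ := (u.inner_map_map _ _).symm
    _ = ⟪star a (u f), u g⟫_ℂ := by rw [u.apply_symm_apply]
    _ = ⟪u f, a (u g)⟫_ℂ := by
        rw [ContinuousLinearMap.star_eq_adjoint, ContinuousLinearMap.adjoint_inner_left]
    _ = ⟪u f, u (u.symm (a (u g)))⟫_ℂ := by rw [u.apply_symm_apply]
    _ = ⟪f, u.symm (a (u g))⟫_ℂ := u.inner_map_map _ _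

lemma conjDown_continuous : Continuous (conjDown u) := by
  have h : conjDown u = fun a : H →L[ℂ] H =>
      ((u.symm.toContinuousLinearEquiv : H →L[ℂ] ell2 X).comp a).comp
        (u.toContinuousLinearEquiv : ell2 X →L[ℂ] H) := rfl
  rw [h]
  exact (continuous_const.clm_comp continuous_id).clm_comp continuous_const

end ConjAux

section IndOp

variable {X : Type v}

lemma summable_sq (f : ell2 X) : Summable fun y => ‖f y‖ ^ (2:ℕ) := by
  have h := ((memℓp_gen_iff (by norm_num : (0:ℝ) < (2:ℝ≥0∞).toReal)).1 (lp.memℓp f))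
  have e : ∀ x : ℝ, x ^ (2:ℝ≥0∞).toReal = x ^ (2:ℕ) := fun x => by
    rw [show (2:ℝ≥0∞).toReal = ((2:ℕ):ℝ) by norm_num, Real.rpow_natCast]
  simpa only [e] using h

lemma norm_sq_tsum (f : ell2 X) : ‖f‖ ^ (2:ℕ) = ∑' y, ‖f y‖ ^ (2:ℕ) := by
  have h := lp.norm_rpow_eq_tsum (by norm_num : (0:ℝ) < (2:ℝ≥0∞).toReal) f
  have e : ∀ x : ℝ, x ^ (2:ℝ≥0∞).toReal = x ^ (2:ℕ) := fun x => by
    rw [show (2:ℝ≥0∞).toReal = ((2:ℕ):ℝ) by norm_num, Real.rpow_natCast]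
  simpa only [e] using h

lemma memℓp_indicator (S : Set X) [DecidablePred (· ∈ S)] (f : ell2 X) :
    Memℓp (fun y => if y ∈ S then f y else 0) 2 := by
  apply memℓp_gen
  have e : ∀ x : ℝ, x ^ (2:ℝ≥0∞).toReal = x ^ (2:ℕ) := fun x => by
    rw [show (2:ℝ≥0∞).toReal = ((2:ℕ):ℝ) by norm_num, Real.rpow_natCast]
  simp only [e]
  refine Summable.of_nonneg_of_le (fun y => by positivity) (fun y => ?_) (summable_sq f)
  by_cases h : y ∈ S
  · simp [h]
  · simp [h]

/-- Multiplication by the indicator function of `S` on `ℓ²(X)`. -/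
def indOp (S : Set X) [DecidablePred (· ∈ S)] : ell2 X →L[ℂ] ell2 X :=
  LinearMap.mkContinuous
    { toFun := fun f => ⟨fun y => if y ∈ S then f y else 0, memℓp_indicator S f⟩
      map_add' := fun f g => by
        apply lp.ext; funext y
        show (if y ∈ S then (f + g) y else 0)
            = (if y ∈ S then f y else 0) + (if y ∈ S then g y else 0)
        rw [lp.coeFn_add, Pi.add_apply]
        by_cases h : y ∈ S
        · rw [if_pos h, if_pos h, if_pos h]
        · rw [if_neg h, if_neg h, if_neg h, add_zero]
      map_smul' := fun c f => by
        apply lp.ext; funext y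
        show (if y ∈ S then (c • f) y else 0) = c * (if y ∈ S then f y else 0)
        rw [smul_coord]
        by_cases h : y ∈ S
        · rw [if_pos h, if_pos h]
        · rw [if_neg h, if_neg h, mul_zero] } 1
    (fun f => by
      rw [one_mul]
      have h2 : ∀ a b : ℝ, 0 ≤ a → 0 ≤ b → a ^ (2:ℕ) ≤ b ^ (2:ℕ) → a ≤ b := fun a b ha hb h =>
        le_of_pow_le_pow_left₀ (by norm_num) hb h
      refine h2 _ _ (norm_nonneg _) (norm_nonneg _) ?_
      rw [norm_sq_tsum, norm_sq_tsum]
      refine Summable.tsum_le_tsum (fun y => ?_) ?_ (summable_sq f)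
      · show ‖if y ∈ S then f y else 0‖ ^ (2:ℕ) ≤ _
        by_cases h : y ∈ S
        · simp [h]
        · simp [h]
      · refine Summable.of_nonneg_of_le (fun y => by positivity) (fun y => ?_) (summable_sq f)
        show ‖if y ∈ S then f y else 0‖ ^ (2:ℕ) ≤ _
        by_cases h : y ∈ S
        · simp [h]
        · simp [h])

lemma indOp_apply (S : Set X) [DecidablePred (· ∈ S)] (f : ell2 X) (y : X) :
    (indOp S f) y = if y ∈ S then f y else 0 := rfl

lemma indOp_delta_mem (S : Set X) [DecidablePred (· ∈ S)] {y : X} (h : y ∈ S) :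
    indOp S (delta y) = (delta y : ell2 X) := by
  apply lp.ext; funext z
  rw [indOp_apply]
  by_cases hz : z ∈ S
  · rw [if_pos hz]
  · rw [if_neg hz, delta_apply_ne (fun hzy => hz (by rw [hzy]; exact h))]

lemma indOp_delta_not_mem (S : Set X) [DecidablePred (· ∈ S)] {y : X} (h : y ∉ S) :
    indOp S (delta y) = 0 := by
  apply lp.ext; funext z
  rw [indOp_apply]
  by_cases hz : z ∈ S
  · rw [if_pos hz, delta_apply_ne (fun hzy => h (by rw [← hzy]; exact hz))]
    rfl
  · rw [if_neg hz]
    rfl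

lemma norm_le_of_unique_coord (v : ell2 X) {ε : ℝ} (hε : 0 ≤ ε)
    (hbd : ∀ x, ‖v x‖ ≤ ε) (huniq : ∀ x x', x ≠ x' → v x = 0 ∨ v x' = 0) :
    ‖v‖ ≤ ε := by
  by_cases hz : ∀ x, v x = 0
  · have hv : v = 0 := by
      apply lp.ext; funext x
      exact hz x
    rw [hv, norm_zero]
    exact hε
  · push_neg at hz
    obtain ⟨x₀, hx₀⟩ := hz
    have hv : v = v x₀ • (delta x₀ : ell2 X) := by
      apply lp.ext; funext z
      rw [smul_coord]
      by_cases hzx : z = x₀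
      · subst hzx; rw [delta_apply_self, mul_one]
      · rw [delta_apply_ne hzx, mul_zero]
        rcases huniq z x₀ hzx with h | h
        · exact h
        · exact absurd h hx₀
    rw [hv, norm_smul, norm_delta, mul_one]
    exact hbd x₀

lemma opNorm_le_of_diag (r : ell2 X →L[ℂ] ell2 X) {ε : ℝ} (hε : 0 ≤ ε)
    (hdiag : ∀ y y', y ≠ y' → matEntry (star r * r) y y' = 0)
    (hcol : ∀ y, ‖r (delta y)‖ ≤ ε) : ‖r‖ ≤ ε := by
  refine r.opNorm_le_bound hε fun f => ?_
  have key : ∀ y, matEntry (star r * r) y y = ⟪r (delta y), r (delta y)⟫_ℂ := fun y => by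
    rw [matEntry_eq_inner, ContinuousLinearMap.mul_apply, ContinuousLinearMap.star_eq_adjoint,
      ContinuousLinearMap.adjoint_inner_right]
  have hg : ∀ y, ‖matEntry (star r * r) y y‖ ≤ ε ^ (2:ℕ) := fun y => by
    rw [key, inner_self_eq_norm_sq_to_K]
    rw [norm_pow, RCLike.norm_ofReal, abs_of_nonneg (norm_nonneg _)]
    exact pow_le_pow_left₀ (norm_nonneg _) (hcol y) 2
  have happ : ∀ y, ((star r * r) f) y = matEntry (star r * r) y y * f y :=
    fun y => diag_apply_of_offDiag hdiag f y
  have h2 : ⟪r f, r f⟫_ℂ = ⟪f, (star r * r) f⟫_ℂ := by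
    rw [ContinuousLinearMap.mul_apply, ContinuousLinearMap.star_eq_adjoint,
      ContinuousLinearMap.adjoint_inner_right]
  have hterm : ∀ y, ‖⟪f y, ((star r * r) f) y⟫_ℂ‖ ≤ ε ^ (2:ℕ) * ‖f y‖ ^ (2:ℕ) := fun y => by
    rw [happ y]
    have : ⟪f y, matEntry (star r * r) y y * f y⟫_ℂ
        = (starRingEnd ℂ) (f y) * (matEntry (star r * r) y y * f y) := rfl.trans (mul_comm _ _)
    rw [this, norm_mul, norm_mul, RCLike.norm_conj]
    calc ‖f y‖ * (‖matEntry (star r * r) y y‖ * ‖f y‖)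
        ≤ ‖f y‖ * (ε ^ (2:ℕ) * ‖f y‖) := by
          refine mul_le_mul_of_nonneg_left ?_ (norm_nonneg _)
          exact mul_le_mul_of_nonneg_right (hg y) (norm_nonneg _)
      _ = ε ^ (2:ℕ) * ‖f y‖ ^ (2:ℕ) := by ring
  have hsumR : Summable fun y => ε ^ (2:ℕ) * ‖f y‖ ^ (2:ℕ) := (summable_sq f).mul_left _
  have hsumL : Summable fun y => ‖⟪f y, ((star r * r) f) y⟫_ℂ‖ :=
    Summable.of_nonneg_of_le (fun y => norm_nonneg _) hterm hsumR
  have h3 : ‖⟪f, (star r * r) f⟫_ℂ‖ ≤ ε ^ (2:ℕ) * ‖f‖ ^ (2:ℕ) := by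
    rw [lp.inner_eq_tsum]
    calc ‖∑' y, ⟪f y, ((star r * r) f) y⟫_ℂ‖
        ≤ ∑' y, ‖⟪f y, ((star r * r) f) y⟫_ℂ‖ := norm_tsum_le_tsum_norm hsumL
      _ ≤ ∑' y, ε ^ (2:ℕ) * ‖f y‖ ^ (2:ℕ) := Summable.tsum_le_tsum hterm hsumL hsumR
      _ = ε ^ (2:ℕ) * ∑' y, ‖f y‖ ^ (2:ℕ) := tsum_mul_left
      _ = ε ^ (2:ℕ) * ‖f‖ ^ (2:ℕ) := by rw [← norm_sq_tsum]
  have h4 : ‖r f‖ ^ (2:ℕ) ≤ (ε * ‖f‖) ^ (2:ℕ) := by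
    have h5 : ‖r f‖ ^ (2:ℕ) = RCLike.re ⟪r f, r f⟫_ℂ := (inner_self_eq_norm_sq _).symm
    rw [h5, h2]
    calc RCLike.re ⟪f, (star r * r) f⟫_ℂ ≤ ‖⟪f, (star r * r) f⟫_ℂ‖ := RCLike.re_le_norm _
      _ ≤ ε ^ (2:ℕ) * ‖f‖ ^ (2:ℕ) := h3
      _ = (ε * ‖f‖) ^ (2:ℕ) := by ring
  exact le_of_pow_le_pow_left₀ (by norm_num) (by positivity) h4

end IndOp

section CartanAux

set_option linter.unusedSectionVars false

variable {H : Type u} [NormedAddCommGroup H] [InnerProductSpace ℂ H] [CompleteSpace H]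
variable {A B : Set (H →L[ℂ] H)}

lemma memB_mul (hB : IsCstarSubalgebra B) {a b : H →L[ℂ] H} (ha : a ∈ B) (hb : b ∈ B) :
    a * b ∈ B := by
  obtain ⟨-, S, hS⟩ := hB
  rw [← hS] at ha hb ⊢
  exact mul_mem ha hb

lemma proj_orth (hB : IsCartanIn B A) {x y : MinProj B} (hxy : x ≠ y) :
    x.val * y.val = 0 := by
  have hcomm := hB.2.2.1.2.1
  set p := x.val with hp
  set q := y.val with hq
  have hpB : p ∈ B := x.2.1
  have hqB : q ∈ B := y.2.1
  have hpq : q * p = p * q := hcomm q hqB p hpB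
  have hpqB : p * q ∈ B := memB_mul hB.2.1 hpB hqB
  have hproj : IsProj (p * q) := by
    constructor
    · have h1 : p * q * (p * q) = p * (q * p) * q := by simp only [mul_assoc]
      rw [h1, hpq]
      have h2 : p * (p * q) * q = p * p * (q * q) := by simp only [mul_assoc]
      rw [h2, x.2.2.1.1, y.2.2.1.1]
    · have hps : star p = p := x.2.2.1.2
      have hqs : star q = q := y.2.2.1.2
      show star (p * q) = p * q
      rw [star_mul, hqs, hps, hpq]
  have hle : p * q * p = p * q := by
    calc p * q * p = p * (q * p) := by rw [mul_assoc]
      _ = p * (p * q) := by rw [hpq]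
      _ = p * p * q := by rw [← mul_assoc]
      _ = p * q := by rw [x.2.2.1.1]
  rcases x.2.2.2.2 (p * q) hpqB hproj hle with h0 | hp'
  · exact h0
  · have hleq : p * q * q = p * q := by rw [mul_assoc, y.2.2.1.1]
    rcases y.2.2.2.2 (p * q) hpqB hproj hleq with h0 | hq'
    · exact h0
    · exact absurd (Subtype.ext (hp'.symm.trans hq')) hxy

lemma inner_proj_move {p : H →L[ℂ] H} (hsa : IsSelfAdjoint p) (v w : H) :
    ⟪p v, w⟫_ℂ = ⟪v, p w⟫_ℂ := by
  conv_lhs => rw [← hsa.star_eq]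
  rw [ContinuousLinearMap.star_eq_adjoint, ContinuousLinearMap.adjoint_inner_left]

variable (ξ : MinProj B → H) (u : ell2 (MinProj B) ≃ₗᵢ[ℂ] H)

lemma proj_apply (hB : IsCartanIn B A)
    (hξ : ∀ x : MinProj B, ‖ξ x‖ = 1 ∧ x.val (ξ x) = ξ x)
    (hu : ∀ x, u (delta x) = ξ x) (x : MinProj B) (v : H) :
    x.val v = ⟪ξ x, v⟫_ℂ • ξ x := by
  have hsa : IsSelfAdjoint x.val := x.2.2.1.2
  have key : u.symm (x.val v) = ⟪ξ x, v⟫_ℂ • (delta x : ell2 (MinProj B)) := by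
    apply lp.ext; funext y
    rw [symm_apply_coord, hu, smul_coord]
    by_cases hyx : y = x
    · subst hyx
      rw [delta_apply_self, mul_one, ← inner_proj_move hsa]
      rw [(hξ y).2]
    · rw [delta_apply_ne hyx, mul_zero, ← inner_proj_move hsa]
      have h0 : x.val (ξ y) = 0 := by
        conv_lhs => rw [← (hξ y).2]
        rw [← ContinuousLinearMap.mul_apply, proj_orth hB (fun h => hyx h.symm)]
        rfl
      rw [h0, inner_zero_left]
  have h := congrArg u key
  rwa [u.apply_symm_apply, map_smul, hu] at h

lemma diag_of_memB (hB : IsCartanIn B A)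
    (hξ : ∀ x : MinProj B, ‖ξ x‖ = 1 ∧ x.val (ξ x) = ξ x)
    (hu : ∀ x, u (delta x) = ξ x) {b : H →L[ℂ] H} (hb : b ∈ B) :
    IsDiagonalOp (conjDown u b) := by
  refine ⟨fun x => ⟪ξ x, b (ξ x)⟫_ℂ, fun f x => ?_⟩
  rw [conjDown_apply, symm_apply_coord, hu]
  have hsa : IsSelfAdjoint x.val := x.2.2.1.2
  have hcomm : x.val * b = b * x.val := hB.2.2.1.2.1 x.val x.2.1 b hb
  calc ⟪ξ x, b (u f)⟫_ℂ = ⟪x.val (ξ x), b (u f)⟫_ℂ := by rw [(hξ x).2]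
    _ = ⟪ξ x, x.val (b (u f))⟫_ℂ := inner_proj_move hsa _ _
    _ = ⟪ξ x, b (x.val (u f))⟫_ℂ := by
        rw [← ContinuousLinearMap.comp_apply, ← ContinuousLinearMap.mul_def, hcomm,
          ContinuousLinearMap.mul_def, ContinuousLinearMap.comp_apply]
    _ = ⟪ξ x, b (⟪ξ x, u f⟫_ℂ • ξ x)⟫_ℂ := by rw [proj_apply ξ u hB hξ hu]
    _ = ⟪ξ x, u f⟫_ℂ * ⟪ξ x, b (ξ x)⟫_ℂ := by rw [map_smul, inner_smul_right]
    _ = ⟪ξ x, b (ξ x)⟫_ℂ * f x := by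
        rw [← hu, u.inner_map_map, inner_delta_left, mul_comm]

lemma matEntry_conj (hu : ∀ x, u (delta x) = ξ x) (a : H →L[ℂ] H) (x y : MinProj B) :
    matEntry (conjDown u a) x y = ⟪ξ x, a (ξ y)⟫_ℂ := by
  rw [matEntry_conjDown, hu, hu]

lemma entry_le_norm (hB : IsCartanIn B A)
    (hξ : ∀ x : MinProj B, ‖ξ x‖ = 1 ∧ x.val (ξ x) = ξ x)
    (hu : ∀ x, u (delta x) = ξ x) (a : H →L[ℂ] H) (x y : MinProj B) :
    ‖⟪ξ x, a (ξ y)⟫_ℂ‖ ≤ ‖x.val * a * y.val‖ := by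
  have h1 : (x.val * a * y.val) (ξ y) = ⟪ξ x, a (ξ y)⟫_ℂ • ξ x := by
    rw [ContinuousLinearMap.mul_apply, ContinuousLinearMap.mul_apply, (hξ y).2,
      proj_apply ξ u hB hξ hu]
  calc ‖⟪ξ x, a (ξ y)⟫_ℂ‖ = ‖⟪ξ x, a (ξ y)⟫_ℂ • ξ x‖ := by
        rw [norm_smul, (hξ x).1, mul_one]
    _ = ‖(x.val * a * y.val) (ξ y)‖ := by rw [h1]
    _ ≤ ‖x.val * a * y.val‖ * ‖ξ y‖ := ContinuousLinearMap.le_opNorm _ _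
    _ = ‖x.val * a * y.val‖ := by rw [(hξ y).1, mul_one]

lemma col_orth (hB : IsCartanIn B A)
    (hξ : ∀ x : MinProj B, ‖ξ x‖ = 1 ∧ x.val (ξ x) = ξ x)
    (hu : ∀ x, u (delta x) = ξ x) {n : H →L[ℂ] H} (hn : n ∈ NormalizerIn A B)
    {x x' : MinProj B} (y : MinProj B) (hxx' : x ≠ x') :
    ⟪ξ x, n (ξ y)⟫_ℂ = 0 ∨ ⟪ξ x', n (ξ y)⟫_ℂ = 0 := by
  have hdB : n * y.val * star n ∈ B := (hn.2 y.val y.2.1).1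
  have hdiag := diag_of_memB ξ u hB hξ hu hdB
  have hent := matEntry_of_diag hdiag hxx'
  rw [matEntry_conj ξ u hu] at hent
  have hc : (n * y.val * star n) (ξ x') = ⟪n (ξ y), ξ x'⟫_ℂ • n (ξ y) := by
    rw [ContinuousLinearMap.mul_apply, ContinuousLinearMap.mul_apply,
      proj_apply ξ u hB hξ hu, map_smul]
    rw [ContinuousLinearMap.star_eq_adjoint, ContinuousLinearMap.adjoint_inner_right]
  rw [hc, inner_smul_right] at hent
  rcases mul_eq_zero.1 hent with h | h
  · right
    rw [← inner_conj_symm, h, map_zero]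
  · left; exact h

lemma row_orth (hB : IsCartanIn B A)
    (hξ : ∀ x : MinProj B, ‖ξ x‖ = 1 ∧ x.val (ξ x) = ξ x)
    (hu : ∀ x, u (delta x) = ξ x) {n : H →L[ℂ] H} (hn : n ∈ NormalizerIn A B)
    (x : MinProj B) {y y' : MinProj B} (hyy' : y ≠ y') :
    ⟪ξ x, n (ξ y)⟫_ℂ = 0 ∨ ⟪ξ x, n (ξ y')⟫_ℂ = 0 := by
  have hdB : star n * x.val * n ∈ B := (hn.2 x.val x.2.1).2
  have hdiag := diag_of_memB ξ u hB hξ hu hdB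
  have hent := matEntry_of_diag hdiag hyy'
  rw [matEntry_conj ξ u hu] at hent
  have hc : (star n * x.val * n) (ξ y') = ⟪ξ x, n (ξ y')⟫_ℂ • star n (ξ x) := by
    rw [ContinuousLinearMap.mul_apply, ContinuousLinearMap.mul_apply,
      proj_apply ξ u hB hξ hu, map_smul]
  rw [hc, inner_smul_right] at hent
  have hadj : ⟪ξ y, star n (ξ x)⟫_ℂ = starRingEnd ℂ ⟪ξ x, n (ξ y)⟫_ℂ := by
    rw [ContinuousLinearMap.star_eq_adjoint, ContinuousLinearMap.adjoint_inner_right,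
      ← inner_conj_symm]
  rw [hadj] at hent
  rcases mul_eq_zero.1 hent with h | h
  · right; exact h
  · left
    have := congrArg (starRingEnd ℂ) h
    rwa [RingHom.map_zero, starRingEnd_self_apply] at this

end CartanAux

section RoeAux

set_option linter.unusedSectionVars false

variable {H : Type u} [NormedAddCommGroup H] [InnerProductSpace ℂ H] [CompleteSpace H]
variable {A B : Set (H →L[ℂ] H)}
variable (ξ : MinProj B → H) (u : ell2 (MinProj B) ≃ₗᵢ[ℂ] H)

lemma normalizer_mem_roe (hB : IsCartanIn B A)
    (hξ : ∀ x : MinProj B, ‖ξ x‖ = 1 ∧ x.val (ξ x) = ξ x)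
    (hu : ∀ x, u (delta x) = ξ x)
    (𝓔 : CoarseStructure (MinProj B)) (hgen : 𝓔.IsGeneratedBy (cartanEntourages A B))
    {n : H →L[ℂ] H} (hn : n ∈ NormalizerIn A B) :
    conjDown u n ∈ CoarseRoeAlgebra (MinProj B) 𝓔 := by
  classical
  show conjDown u n ∈ closure {a : ell2 (MinProj B) →L[ℂ] ell2 (MinProj B) |
    opSupport a ∈ 𝓔.sets}
  refine Metric.mem_closure_iff.2 fun ε hε => ?_
  set M : MinProj B → MinProj B → ℂ := fun x y => ⟪ξ x, n (ξ y)⟫_ℂ with hM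
  have hε'pos : 0 < ε / 2 := half_pos hε
  set S : Set (MinProj B) := {y | ∃ x, ε / 2 ≤ ‖M x y‖} with hS
  set b := (conjDown u n).comp (indOp S) with hb
  have hentry : ∀ x y, matEntry b x y = if y ∈ S then M x y else 0 := by
    intro x y
    show (conjDown u n (indOp S (delta y))) x = _
    by_cases h : y ∈ S
    · rw [indOp_delta_mem S h, if_pos h]
      exact matEntry_conj ξ u hu n x y
    · rw [indOp_delta_not_mem S h, if_neg h, map_zero]
      rfl
  refine ⟨b, ?_, ?_⟩
  · show opSupport b ∈ 𝓔.sets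
    have hE : {q : MinProj B × MinProj B |
        ε / 2 ≤ ‖(q.1 : H →L[ℂ] H) * n * (q.2 : H →L[ℂ] H)‖} ∈ 𝓔.sets :=
      hgen.1 ⟨n, hn, ε / 2, hε'pos, rfl⟩
    refine 𝓔.subset_mem hE ?_
    rintro ⟨x, y⟩ hxy
    have hxy' : matEntry b x y ≠ 0 := hxy
    by_cases h : y ∈ S
    · have hyS := h
      obtain ⟨x₀, hx₀⟩ := hyS
      have hMxy : M x y ≠ 0 := by
        rw [hentry, if_pos h] at hxy'
        exact hxy'
      have hxx₀ : x = x₀ := by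
        by_contra hne
        rcases col_orth ξ u hB hξ hu hn y hne with h0 | h0
        · exact hMxy h0
        · have h0' : M x₀ y = 0 := h0
          rw [h0', norm_zero] at hx₀
          linarith
      show ε / 2 ≤ ‖(x : H →L[ℂ] H) * n * (y : H →L[ℂ] H)‖
      calc ε / 2 ≤ ‖M x y‖ := by rw [hxx₀]; exact hx₀
        _ ≤ ‖x.val * n * y.val‖ := entry_le_norm ξ u hB hξ hu n x y
    · exact absurd (by rw [hentry, if_neg h]) hxy'
  · set r := conjDown u n - b with hr
    have hcoords : ∀ y x, (r (delta y)) x = if y ∈ S then 0 else M x y := by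
      intro y x
      have h1 : (r (delta y)) x
          = (conjDown u n (delta y)) x - (conjDown u n (indOp S (delta y))) x := rfl
      rw [h1]
      by_cases h : y ∈ S
      · rw [if_pos h, indOp_delta_mem S h, sub_self]
      · rw [if_neg h, indOp_delta_not_mem S h, map_zero]
        have hz : ((0 : ell2 (MinProj B)) : ∀ _ : MinProj B, ℂ) x = 0 := rfl
        rw [hz, sub_zero]
        exact matEntry_conj ξ u hu n x y
    have hcolnorm : ∀ y, ‖r (delta y)‖ ≤ ε / 2 := by
      intro y
      refine norm_le_of_unique_coord _ hε'pos.le (fun x => ?_) (fun x x' hxx' => ?_)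
      · rw [hcoords]
        by_cases h : y ∈ S
        · rw [if_pos h, norm_zero]
          exact hε'pos.le
        · rw [if_neg h]
          have h2 : ¬ (ε / 2 ≤ ‖M x y‖) := fun hc => h ⟨x, hc⟩
          linarith [not_le.1 h2]
      · rw [hcoords, hcoords]
        by_cases h : y ∈ S
        · left; rw [if_pos h]
        · rw [if_neg h, if_neg h]
          exact col_orth ξ u hB hξ hu hn y hxx'
    have hdiag : ∀ y y', y ≠ y' → matEntry (star r * r) y y' = 0 := by
      intro y y' hyy'
      rw [matEntry_eq_inner, ContinuousLinearMap.mul_apply,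
        ContinuousLinearMap.star_eq_adjoint, ContinuousLinearMap.adjoint_inner_right,
        lp.inner_eq_tsum]
      have hterm : ∀ x, ⟪(r (delta y)) x, (r (delta y')) x⟫_ℂ = 0 := by
        intro x
        have he : ⟪(r (delta y)) x, (r (delta y')) x⟫_ℂ
            = starRingEnd ℂ ((r (delta y)) x) * ((r (delta y')) x) := rfl.trans (mul_comm _ _)
        rw [he, hcoords, hcoords]
        by_cases h : y ∈ S
        · rw [if_pos h, map_zero, zero_mul]
        · by_cases h' : y' ∈ S
          · rw [if_pos h', mul_zero]
          · rw [if_neg h, if_neg h']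
            rcases row_orth ξ u hB hξ hu hn x hyy' with h0 | h0
            · have h0' : M x y = 0 := h0
              rw [h0', map_zero, zero_mul]
            · have h0' : M x y' = 0 := h0
              rw [h0', mul_zero]
      calc ∑' x, ⟪(r (delta y)) x, (r (delta y')) x⟫_ℂ = ∑' _ : MinProj B, (0:ℂ) :=
            tsum_congr hterm
        _ = 0 := tsum_zero
    have hnorm : ‖r‖ ≤ ε / 2 := opNorm_le_of_diag r hε'pos.le hdiag hcolnorm
    rw [dist_eq_norm]
    calc ‖conjDown u n - b‖ = ‖r‖ := rfl
      _ ≤ ε / 2 := hnorm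
      _ < ε := by linarith

end RoeAux

section RoeClosure

variable {X : Type v} (𝓔 : CoarseStructure X)

lemma supp_zero_mem : (0 : ell2 X →L[ℂ] ell2 X) ∈
    {a : ell2 X →L[ℂ] ell2 X | opSupport a ∈ 𝓔.sets} := by
  refine 𝓔.subset_mem 𝓔.diag_mem ?_
  rintro ⟨x, y⟩ hq
  exact absurd rfl hq

lemma supp_add_mem {a b : ell2 X →L[ℂ] ell2 X}
    (ha : opSupport a ∈ 𝓔.sets) (hb : opSupport b ∈ 𝓔.sets) :
    opSupport (a + b) ∈ 𝓔.sets := by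
  refine 𝓔.subset_mem (𝓔.union_mem ha hb) ?_
  rintro ⟨x, y⟩ hq
  by_contra hc
  rw [Set.mem_union] at hc
  push_neg at hc
  have h1 : matEntry a x y = 0 := by_contra fun h => hc.1 h
  have h2 : matEntry b x y = 0 := by_contra fun h => hc.2 h
  exact hq (by rw [matEntry_add, h1, h2, add_zero])

lemma supp_smul_mem (c : ℂ) {a : ell2 X →L[ℂ] ell2 X}
    (ha : opSupport a ∈ 𝓔.sets) : opSupport (c • a) ∈ 𝓔.sets := by
  refine 𝓔.subset_mem ha ?_
  rintro ⟨x, y⟩ hq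
  intro hc
  exact hq (by rw [matEntry_smul, hc, mul_zero])

lemma supp_star_mem {a : ell2 X →L[ℂ] ell2 X}
    (ha : opSupport a ∈ 𝓔.sets) : opSupport (star a) ∈ 𝓔.sets := by
  refine 𝓔.subset_mem (𝓔.inv_mem ha) ?_
  rintro ⟨x, y⟩ hq
  show matEntry a y x ≠ 0
  intro hc
  exact hq (by rw [matEntry_star, hc, map_zero])

lemma supp_mul_mem {a b : ell2 X →L[ℂ] ell2 X}
    (ha : opSupport a ∈ 𝓔.sets) (hb : opSupport b ∈ 𝓔.sets) :
    opSupport (a * b) ∈ 𝓔.sets := by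
  refine 𝓔.subset_mem (𝓔.comp_mem ha hb) ?_
  rintro ⟨x, y⟩ hq
  by_contra hc
  have hterm : ∀ z, (b (delta y)) z * matEntry a x z = 0 := by
    intro z
    by_cases h1 : matEntry a x z = 0
    · rw [h1, mul_zero]
    · by_cases h2 : matEntry b z y = 0
      · have hz : (b (delta y)) z = 0 := h2
        rw [hz, zero_mul]
      · exact absurd ⟨z, h1, h2⟩ hc
  have h0 : matEntry (a * b) x y = 0 := by
    have he : (fun z => (b (delta y)) z * matEntry a x z) = fun _ => (0:ℂ) := funext hterm
    have hs := matEntry_mul a b x y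
    rw [he] at hs
    exact hs.unique hasSum_zero
  exact hq h0

end RoeClosure

/-- Conjugating by the unitary `u : ℓ²(X) → H` built from unit vectors in the
ranges of the minimal projections of `B`, one has `u* B u ⊆ ℓ∞(X)` and
`u* A u ⊆ C*_u(X;𝓔_A)`. -/
theorem stmt10 {H : Type u} [NormedAddCommGroup H] [InnerProductSpace ℂ H] [CompleteSpace H]
    (A B : Set (H →L[ℂ] H))
    (hunital : (1 : H →L[ℂ] H) ∈ A)
    (hK : ∀ k : H →L[ℂ] H, IsCompactOperator (⇑k) → k ∈ A)
    (hB : IsCartanIn B A)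
    (ξ : MinProj B → H)
    (hξ : ∀ x : MinProj B, ‖ξ x‖ = 1 ∧ (x : {p : H →L[ℂ] H // IsMinimalProjIn B p}).val (ξ x) = ξ x)
    (u : ell2 (MinProj B) ≃ₗᵢ[ℂ] H) (hu : ∀ x : MinProj B, u (delta x) = ξ x)
    (𝓔 : CoarseStructure (MinProj B))
    (hgen : 𝓔.IsGeneratedBy (cartanEntourages A B)) :
    conjDown u '' B ⊆ LinfOps (MinProj B) ∧
    conjDown u '' A ⊆ CoarseRoeAlgebra (MinProj B) 𝓔 := by
  constructor
  · rintro a' ⟨b, hb, rfl⟩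
    exact diag_of_memB ξ u hB hξ hu hb
  · rintro a' ⟨a, ha, rfl⟩
    have hgenA : CstarGen (NormalizerIn A B) = A := hB.2.2.2.2.1
    rw [← hgenA] at ha
    have hRclosed : IsClosed (CoarseRoeAlgebra (MinProj B) 𝓔) := isClosed_closure
    set P : Set (H →L[ℂ] H) := conjDown u ⁻¹' (CoarseRoeAlgebra (MinProj B) 𝓔) with hP
    have hPclosed : IsClosed P := hRclosed.preimage (conjDown_continuous u)
    have hsub : ((NonUnitalStarAlgebra.adjoin ℂ (NormalizerIn A B) :
        NonUnitalStarSubalgebra ℂ (H →L[ℂ] H)) : Set (H →L[ℂ] H)) ⊆ P := by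
      intro z hz
      have hz' : z ∈ NonUnitalStarAlgebra.adjoin ℂ (NormalizerIn A B) := hz
      clear hz
      induction hz' using NonUnitalStarAlgebra.adjoin_induction with
      | mem x hx =>
          exact normalizer_mem_roe ξ u hB hξ hu 𝓔 hgen hx
      | add x y hx hy hxP hyP =>
          show conjDown u (x + y) ∈ CoarseRoeAlgebra (MinProj B) 𝓔
          rw [conjDown_add]
          exact map_mem_closure₂ continuous_add hxP hyP
            (fun p hp q hq => supp_add_mem 𝓔 hp hq)
      | zero =>
          show conjDown u 0 ∈ CoarseRoeAlgebra (MinProj B) 𝓔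
          rw [conjDown_zero]
          exact subset_closure (supp_zero_mem 𝓔)
      | mul x y hx hy hxP hyP =>
          show conjDown u (x * y) ∈ CoarseRoeAlgebra (MinProj B) 𝓔
          rw [conjDown_mul]
          exact map_mem_closure₂ continuous_mul hxP hyP
            (fun p hp q hq => supp_mul_mem 𝓔 hp hq)
      | smul c x hx hxP =>
          show conjDown u (c • x) ∈ CoarseRoeAlgebra (MinProj B) 𝓔
          rw [conjDown_smul]
          exact map_mem_closure (continuous_const_smul c) hxP
            (fun p hp => supp_smul_mem 𝓔 c hp)
      | star x hx hxP =>
          show conjDown u (star x) ∈ CoarseRoeAlgebra (MinProj B) 𝓔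
          rw [conjDown_star]
          exact map_mem_closure continuous_star hxP (fun p hp => supp_star_mem 𝓔 hp)
    have hfinal : CstarGen (NormalizerIn A B) ⊆ P := closure_minimal hsub hPclosed
    exact hfinal ha

end RoeCartan
end
end

section
/- Let H be a Hilbert space, let A ⊆ B(H) be a unital C*-subalgebra containing all compact operators K(H), and let B ⊆ A be a Cartan subalgebra which is abstractly *-isomorphic to ℓ∞(I) for some set I. Then for every a ∈ N_A(B) and every ε > 0 there exist f ∈ B and a partial isometry v ∈ A with vBv* ∪ v*Bv ⊆ B such that ‖a − f v‖ ≤ ε. -/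
/- Common definitions for formalising "Cartan subalgebras of uniform Roe algebras"
   (White–Willett).  We model C*-subalgebras of B(H) as norm-closed sets of
   continuous linear operators underlying non-unital star subalgebras. -/

open scoped InnerProductSpace ENNReal
open Filter

noncomputable section

universe u v

namespace RoeCartan


set_option maxHeartbeats 1600000

/-- Every normaliser of a Cartan subalgebra `B ≅ ℓ∞(I)` can be approximated in
norm by products `f v` with `f ∈ B` and `v ∈ A` a partial isometry normalising `B`. -/
theorem stmt13 {H : Type u} [NormedAddCommGroup H] [InnerProductSpace ℂ H] [CompleteSpace H]
    (A B : Set (H →L[ℂ] H))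
    (hunital : (1 : H →L[ℂ] H) ∈ A)
    (hK : ∀ k : H →L[ℂ] H, IsCompactOperator (⇑k) → k ∈ A)
    (hB : IsCartanIn B A)
    (I : Type u) (hlinf : AbstractlyLinf B I) :
    ∀ a ∈ NormalizerIn A B, ∀ ε > (0 : ℝ),
      ∃ f ∈ B, ∃ v ∈ A, v * star v * v = v ∧
        (∀ b ∈ B, v * b * star v ∈ B ∧ star v * b * v ∈ B) ∧
        ‖a - f * v‖ ≤ ε := by
  classical
  intro a ha ε hε
  obtain ⟨SB, hSBcar, ⟨φ⟩⟩ := hlinf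
  obtain ⟨-, SA, hSAcar⟩ := hB.1
  obtain ⟨hBcl, -⟩ := hB.2.1
  have hBA : B ⊆ A := hB.2.2.1.1
  have haA : a ∈ A := ha.1
  have hmemB : ∀ {x : H →L[ℂ] H}, x ∈ SB ↔ x ∈ B := fun {x} => by rw [← hSBcar]; rfl
  have hmemA : ∀ {x : H →L[ℂ] H}, x ∈ SA ↔ x ∈ A := fun {x} => by rw [← hSAcar]; rfl
  have hAmul : ∀ x ∈ A, ∀ y ∈ A, x * y ∈ A := fun x hx y hy =>
    hmemA.mp (mul_mem (hmemA.mpr hx) (hmemA.mpr hy))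
  have hBmul : ∀ x ∈ B, ∀ y ∈ B, x * y ∈ B := fun x hx y hy =>
    hmemB.mp (mul_mem (hmemB.mpr hx) (hmemB.mpr hy))
  have hBstar : ∀ x ∈ B, star x ∈ B := fun x hx => hmemB.mp (star_mem (hmemB.mpr hx))
  -- the *-homomorphism ℓ∞(I) → B(H) with range B
  set ψ : lp (fun _ : I => ℂ) ∞ →⋆ₙₐ[ℂ] (H →L[ℂ] H) :=
    (NonUnitalStarSubalgebraClass.subtype SB).comp
      (NonUnitalStarAlgHomClass.toNonUnitalStarAlgHom φ.symm) with hψdef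
  have hψB : ∀ x, ψ x ∈ B := fun x => hmemB.mp (φ.symm x).2
  have hψnorm : ∀ x, ‖ψ x‖ ≤ ‖x‖ := fun x => NonUnitalStarAlgHom.norm_apply_le ψ x
  have hψφ : ∀ (x : H →L[ℂ] H) (hx : x ∈ SB), ψ (φ ⟨x, hx⟩) = x := fun x hx => by
    show ((φ.symm (φ ⟨x, hx⟩) : SB) : H →L[ℂ] H) = x
    simp
  have hψinj : Function.Injective ψ := fun x y hxy => by
    apply φ.symm.injective; exact Subtype.ext hxy
  -- pointwise lemmas for lp ∞
  have hmulapp : ∀ (x y : lp (fun _ : I => ℂ) ∞) (j : I), (x * y) j = x j * y j :=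
    fun x y j => congrFun (lp.infty_coeFn_mul x y) j
  have hsubapp : ∀ (x y : lp (fun _ : I => ℂ) ∞) (j : I), (x - y) j = x j - y j :=
    fun x y j => congrFun (lp.coeFn_sub x y) j
  have haddapp : ∀ (x y : lp (fun _ : I => ℂ) ∞) (j : I), (x + y) j = x j + y j :=
    fun x y j => congrFun (lp.coeFn_add x y) j
  have hsmulapp : ∀ (z : ℂ) (x : lp (fun _ : I => ℂ) ∞) (j : I), (z • x) j = z * x j :=
    fun z x j => congrFun (lp.coeFn_smul z x) j
  -- star a * a ∈ B
  obtain ⟨ι, l, e, hl, heB, hconv⟩ := hB.2.2.2.1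
  haveI := hl
  have haa : star a * a ∈ B := by
    have h2 : Tendsto (fun i => star a * (e i * a)) l (nhds (star a * a)) :=
      ((hconv a haA).1).const_mul _
    refine hBcl.mem_of_tendsto h2 (Eventually.of_forall fun i => ?_)
    have h3 := (ha.2 (e i) (heB i)).2
    rwa [mul_assoc] at h3
  have haaSB : star a * a ∈ SB := hmemB.mpr haa
  set β : lp (fun _ : I => ℂ) ∞ := φ ⟨star a * a, haaSB⟩ with hβdef
  have hψβ : ψ β = star a * a := hψφ _ _
  have hβstar : star β = β := by
    set_option synthInstance.maxHeartbeats 400000 in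
    rw [hβdef, ← map_star]
    congr 1
    exact Subtype.ext (by simp [star_mul])
  have hβreal : ∀ i, β i = ((β i).re : ℂ) := by
    intro i
    have h1 : star (β i) = β i := by
      conv_rhs => rw [← hβstar]
      rw [lp.star_apply]
    have him : (β i).im = 0 := by
      have := congrArg Complex.im h1
      simp only [Complex.star_def, Complex.conj_im] at this
      linarith
    exact Complex.ext (by simp) (by simp [him])
  -- positivity of β
  have hβpos : ∀ i, 0 ≤ (β i).re := by
    intro i
    have hηm : Memℓp (fun j : I => if j = i then (1 : ℂ) else 0) ∞ := by
      apply memℓp_infty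
      refine ⟨1, ?_⟩
      rintro x ⟨j, rfl⟩
      by_cases h : j = i <;> simp [h]
    set η : lp (fun _ : I => ℂ) ∞ := ⟨_, hηm⟩ with hηdef
    have hηi : η i = 1 := by simp [hηdef]
    have hηstar : star η = η := lp.ext (funext fun j => by
      rw [lp.star_apply]
      by_cases h : j = i <;> simp [h, hηdef])
    have hηsq : η * η = η := lp.ext (funext fun j => by
      rw [hmulapp]
      by_cases h : j = i <;> simp [h, hηdef])
    have hkey : η * β * η = β i • η := lp.ext (funext fun j => by
      rw [hmulapp, hmulapp, hsmulapp]
      by_cases h : j = i <;> simp [h, hηdef])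
    set q : H →L[ℂ] H := ψ η with hqdef
    have hqstar : star q = q := by rw [hqdef, ← map_star, hηstar]
    have hqadj : ContinuousLinearMap.adjoint q = q := by
      rw [← ContinuousLinearMap.star_eq_adjoint, hqstar]
    have hqsq : q * q = q := by rw [hqdef, ← map_mul, hηsq]
    have hq0 : q ≠ 0 := by
      intro h
      have hη0 : η = 0 := hψinj (by rw [← hqdef, h, map_zero])
      have h1 : η i = 0 := by rw [hη0]; exact congrFun (lp.coeFn_zero _ _) i
      rw [hηi] at h1
      simp at h1
    obtain ⟨ξ, hξ⟩ : ∃ ξ : H, q ξ ≠ 0 := by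
      by_contra h
      push_neg at h
      exact hq0 (ContinuousLinearMap.ext fun ξ => by simpa using h ξ)
    have hq3 : q * (star a * a) * q = β i • q := by
      calc q * (star a * a) * q = ψ (η * β * η) := by
            rw [← hψβ, hqdef, ← map_mul, ← map_mul]
        _ = β i • q := by rw [hkey, map_smul, hqdef]
    set ζ : H := q ξ with hζdef
    have hζ2 : q ζ = ζ := by rw [hζdef, ← ContinuousLinearMap.mul_apply, hqsq]
    have hinner1 : ⟪(star a * a) ζ, ζ⟫_ℂ = ((‖a ζ‖ : ℂ)) ^ 2 := by
      rw [ContinuousLinearMap.mul_apply, ContinuousLinearMap.star_eq_adjoint,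
        ContinuousLinearMap.adjoint_inner_left, inner_self_eq_norm_sq_to_K]
      norm_cast
    have hmove : ∀ u w : H, ⟪u, q w⟫_ℂ = ⟪q u, w⟫_ℂ := fun u w => by
      conv_rhs => rw [← hqadj]
      exact (ContinuousLinearMap.adjoint_inner_left q w u).symm
    have hinner2 : ⟪(star a * a) ζ, ζ⟫_ℂ = β i * ((‖ζ‖ : ℂ)) ^ 2 := by
      have h1 : q ((star a * a) (q ζ)) = (β i • q) ζ := by
        rw [← ContinuousLinearMap.mul_apply, ← ContinuousLinearMap.comp_apply, ← hq3]
        rfl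
      calc ⟪(star a * a) ζ, ζ⟫_ℂ = ⟪(star a * a) (q ζ), q ζ⟫_ℂ := by rw [hζ2]
        _ = ⟪q ((star a * a) (q ζ)), ζ⟫_ℂ := hmove _ _
        _ = ⟪(β i • q) ζ, ζ⟫_ℂ := by rw [h1]
        _ = β i * ((‖ζ‖ : ℂ)) ^ 2 := by
            have hconj : (starRingEnd ℂ) (β i) = β i := by
              rw [hβreal i]; exact Complex.conj_ofReal _
            rw [ContinuousLinearMap.smul_apply, inner_smul_left, hζ2,
              inner_self_eq_norm_sq_to_K, hconj]
            norm_cast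
    have heq : (β i).re * ‖ζ‖ ^ 2 = ‖a ζ‖ ^ 2 := by
      have h2 := hinner1.symm.trans hinner2
      rw [hβreal i] at h2
      have h3 : (((β i).re * ‖ζ‖ ^ 2 : ℝ) : ℂ) = ((‖a ζ‖ ^ 2 : ℝ) : ℂ) := by
        push_cast
        linear_combination h2.symm
      exact_mod_cast h3
    have hζpos : 0 < ‖ζ‖ ^ 2 := pow_pos (norm_pos_iff.mpr hξ) 2
    nlinarith [sq_nonneg ‖a ζ‖]
  -- the cutoff functions
  set r : I → ℝ := fun i => (β i).re with hrdef
  have hr0 : ∀ i, 0 ≤ r i := hβpos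
  have hrbd : ∀ i, r i ≤ ‖β‖ := fun i => by
    have h1 : ‖β i‖ ≤ ‖β‖ := lp.norm_apply_le_norm ENNReal.top_ne_zero β i
    have h2 : r i ≤ ‖β i‖ := by
      rw [hrdef]
      calc (β i).re ≤ |(β i).re| := le_abs_self _
        _ ≤ ‖β i‖ := Complex.abs_re_le_norm _
        _ = ‖β i‖ := rfl
    linarith
  have hε2 : (0 : ℝ) < ε ^ 2 := by positivity
  set P : I → Prop := fun i => ε ^ 2 ≤ r i with hPdef
  have hsq : ∀ i, P i → (0 : ℝ) < Real.sqrt (r i) := fun i hi =>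
    Real.sqrt_pos.mpr (lt_of_lt_of_le hε2 hi)
  have hχm : Memℓp (fun i : I => if P i then (1 : ℂ) else 0) ∞ := by
    apply memℓp_infty
    refine ⟨1, ?_⟩
    rintro x ⟨i, rfl⟩
    by_cases h : P i <;> simp [h]
  have hγm : Memℓp (fun i : I => if P i then ((Real.sqrt (r i))⁻¹ : ℂ) else 0) ∞ := by
    apply memℓp_infty
    refine ⟨ε⁻¹, ?_⟩
    rintro x ⟨i, rfl⟩
    by_cases h : P i
    · simp only [h, if_true]
      rw [show ((Real.sqrt (r i))⁻¹ : ℂ) = ((Real.sqrt (r i))⁻¹ : ℝ) by push_cast; ring,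
        Complex.norm_real, Real.norm_eq_abs, abs_of_nonneg (by positivity)]
      rw [inv_le_inv₀ (hsq i h) hε]
      calc ε = Real.sqrt (ε ^ 2) := by rw [Real.sqrt_sq hε.le]
        _ ≤ Real.sqrt (r i) := Real.sqrt_le_sqrt h
    · simp only [h, if_false, norm_zero]
      positivity
  have hγ'm : Memℓp (fun i : I => if P i then ((Real.sqrt (r i)) : ℂ) else 0) ∞ := by
    apply memℓp_infty
    refine ⟨Real.sqrt ‖β‖, ?_⟩
    rintro x ⟨i, rfl⟩
    by_cases h : P i
    · simp only [h, if_true, Complex.norm_real, Real.norm_eq_abs,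
        abs_of_nonneg (Real.sqrt_nonneg _)]
      exact Real.sqrt_le_sqrt (hrbd i)
    · simp only [h, if_false, norm_zero]
      positivity
  set χ : lp (fun _ : I => ℂ) ∞ := ⟨_, hχm⟩ with hχdef
  set γ : lp (fun _ : I => ℂ) ∞ := ⟨_, hγm⟩ with hγdef
  set γ' : lp (fun _ : I => ℂ) ∞ := ⟨_, hγ'm⟩ with hγ'def
  have hγstar : star γ = γ := lp.ext (funext fun i => by
    rw [lp.star_apply]
    by_cases h : P i <;>
      simp [h, hγdef, ← Complex.ofReal_inv, Complex.conj_ofReal])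
  have hχstar : star χ = χ := lp.ext (funext fun i => by
    rw [lp.star_apply]
    by_cases h : P i <;> simp [h, hχdef])
  have h3 : γ * β * γ = χ := lp.ext (funext fun i => by
    rw [hmulapp, hmulapp]
    by_cases h : P i
    · have hne : (Real.sqrt (r i) : ℂ) ≠ 0 := by
        exact_mod_cast (hsq i h).ne'
      have hri : (β i) = ((Real.sqrt (r i) : ℝ) : ℂ) * ((Real.sqrt (r i) : ℝ) : ℂ) := by
        rw [hβreal i, ← Complex.ofReal_mul, Real.mul_self_sqrt (hr0 i)]
      simp only [h, if_true, hγdef, hχdef, hri]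
      field_simp
    · simp [h, hγdef, hχdef])
  have h4 : γ * χ = γ := lp.ext (funext fun i => by
    rw [hmulapp]
    by_cases h : P i <;> simp [h, hγdef, hχdef])
  have h5 : γ' * χ = γ' := lp.ext (funext fun i => by
    rw [hmulapp]
    by_cases h : P i <;> simp [h, hγ'def, hχdef])
  have h6 : γ * γ' = χ := lp.ext (funext fun i => by
    rw [hmulapp]
    by_cases h : P i
    · have hne : (Real.sqrt (r i) : ℂ) ≠ 0 := by
        exact_mod_cast (hsq i h).ne'
      simp only [h, if_true, hγdef, hγ'def, hχdef]
      field_simp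
    · simp [h, hγdef, hγ'def, hχdef])
  -- the operators
  set c : H →L[ℂ] H := ψ γ with hcdef
  set c' : H →L[ℂ] H := ψ γ' with hc'def
  set p : H →L[ℂ] H := ψ χ with hpdef
  set v : H →L[ℂ] H := a * c with hvdef
  set f : H →L[ℂ] H := v * c' * star v with hfdef
  have hcB : c ∈ B := hψB γ
  have hc'B : c' ∈ B := hψB γ'
  have hstarc : star c = ψ (star γ) := by rw [hcdef, ← map_star]
  have hvA : v ∈ A := hAmul a haA c (hBA hcB)
  have hvpv : star v * v = p := by
    have e1 : star v * v = star c * (star a * a) * c := by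
      rw [hvdef, star_mul]
      simp only [mul_assoc]
    rw [e1, ← hψβ, hstarc, hcdef, ← map_mul, ← map_mul, hγstar, h3, hpdef]
  have hpi : v * star v * v = v := by
    rw [mul_assoc, hvpv]
    rw [hvdef, hpdef, hcdef, mul_assoc, ← map_mul, h4]
  have hnormal : ∀ b ∈ B, v * b * star v ∈ B ∧ star v * b * v ∈ B := by
    intro b hb
    constructor
    · have hin : c * b * star c ∈ B := hBmul _ (hBmul c hcB b hb) _ (hBstar c hcB)
      have h7 := (ha.2 _ hin).1
      have e1 : v * b * star v = a * (c * b * star c) * star a := by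
        rw [hvdef, star_mul]
        simp only [mul_assoc]
      rwa [e1]
    · have hin : star a * b * a ∈ B := (ha.2 b hb).2
      have e1 : star v * b * v = star c * (star a * b * a) * c := by
        rw [hvdef, star_mul]
        simp only [mul_assoc]
      rw [e1]
      exact hBmul _ (hBmul _ (hBstar c hcB) _ hin) _ hcB
  have hfB : f ∈ B := by
    have hin : c * c' * star c ∈ B := hBmul _ (hBmul c hcB c' hc'B) _ (hBstar c hcB)
    have h7 := (ha.2 _ hin).1
    have e1 : f = a * (c * c' * star c) * star a := by
      rw [hfdef, hvdef, star_mul]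
      simp only [mul_assoc]
    rwa [e1]
  have hfv : f * v = a * p := by
    have e1 : f * v = v * (c' * (star v * v)) := by
      rw [hfdef]; simp only [mul_assoc]
    rw [e1, hvpv, hpdef, hc'def, ← map_mul, h5, hvdef, mul_assoc, hcdef, ← map_mul, h6]
  -- norm estimate
  set d : lp (fun _ : I => ℂ) ∞ := β - χ * β - β * χ + χ * β * χ with hddef
  have hdnorm : ‖d‖ ≤ ε ^ 2 := by
    apply lp.norm_le_of_forall_le hε2.le
    intro i
    rw [hddef, haddapp, hsubapp, hsubapp, hmulapp, hmulapp, hmulapp, hmulapp]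
    by_cases h : P i
    · simp only [h, hχdef]
      simp [h]
      positivity
    · have h8 : χ i = 0 := by simp [h, hχdef]
      rw [h8]
      simp only [zero_mul, mul_zero, sub_zero, add_zero]
      rw [hβreal i, Complex.norm_real, Real.norm_eq_abs, abs_of_nonneg (hr0 i)]
      exact (not_le.mp h).le
  have hxnorm : ‖a - f * v‖ ≤ ε := by
    rw [hfv]
    have hpstar : star p = p := by rw [hpdef, ← map_star, hχstar]
    have hexp : star (a - a * p) * (a - a * p)
        = star a * a - p * (star a * a) - (star a * a) * p + p * (star a * a) * p := by
      rw [star_sub, star_mul, hpstar]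
      noncomm_ring
    have hψd : star (a - a * p) * (a - a * p) = ψ d := by
      rw [hexp, hddef, map_add, map_sub, map_sub, map_mul, map_mul, map_mul, map_mul,
        hψβ, hpdef]
      try simp only [mul_assoc]
    have h7 : ‖star (a - a * p) * (a - a * p)‖ ≤ ε ^ 2 := by
      rw [hψd]
      exact (hψnorm d).trans hdnorm
    rw [CStarRing.norm_star_mul_self] at h7
    nlinarith [norm_nonneg (a - a * p)]
  exact ⟨f, hfB, v, hvA, hpi, hnormal, hxnorm⟩

end RoeCartan
end
end
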